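/- arXiv:1102.1248 — 5 statements merged into one kernel-verified Lean document; each statement's English description precedes it below -/
import Mathlib

section
/- Assume the genericity conditions (i) and (ii) hold. Then every subset S of the characteristics 𝒞 that is Γ-connected (i.e., connected in the graph on ℤ^b × ℤ^d in which two distinct points x, y are joined by an edge whenever x − y ∈ Γ) has cardinality at most B = (d+1)(d+2)/2 + b(b+1); in particular |S| < 3(d² + b²). -/
open scoped BigOperators

namespace NLW

noncomputable def dotP {b : ℕ} (ω : Fin b → ℝ) (n : Fin b → ℤ) : ℝ := ∑ k, (n k : ℝ) * ω k

noncomputable def sqnorm {d : ℕ} (v : Fin d → ℤ) : ℝ := ∑ m, ((v m : ℝ))^2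

noncomputable def omega0 {b d : ℕ} (j : Fin b → Fin d → ℤ) : Fin b → ℝ :=
  fun k => Real.sqrt (sqnorm (j k) + 1)

abbrev Idx (b d : ℕ) := (Fin b → ℤ) × (Fin d → ℤ)

def Gamma {b d : ℕ} (p : ℕ) (j : Fin b → Fin d → ℤ) : Set (Idx b d) :=
  {x | ∃ P P' : Fin b → ℕ, (∑ k, (P k + P' k)) = p ∧
        x.1 = (fun k => (P' k : ℤ) - (P k : ℤ)) ∧
        x.2 = (fun m => ∑ k, ((P k : ℤ) - (P' k : ℤ)) * j k m)}

def Bprime (d : ℕ) : ℕ := (d+1)*(d+2)/2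

def Bconst (b d : ℕ) : ℕ := Bprime d + b*(b+1)

def AmbSet {b d : ℕ} (p : ℕ) (j : Fin b → Fin d → ℤ) : Set (Idx b d) :=
  {x | ∃ l : List (Idx b d), l.length ≤ Bconst b d ∧ (∀ y ∈ l, y ∈ Gamma p j) ∧ x = l.sum}

noncomputable def Wfun {b d : ℕ} (j : Fin b → Fin d → ℤ) (x : Idx b d) : ℝ :=
  (sqnorm x.2 - (dotP (omega0 j) x.1)^2)^2 - 4*(dotP (omega0 j) x.1)^2

abbrev LIdx (d : ℕ) := Fin d ⊕ ({q : Fin d × Fin d // q.1 < q.2} ⊕ Fin d)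

noncomputable def Lfun {b d : ℕ} (j : Fin b → Fin d → ℤ) (x : Idx b d) : LIdx d → ℝ :=
  fun i => match i with
  | Sum.inl m => 4*((x.2 m : ℝ))^2 - 4*(dotP (omega0 j) x.1)^2
  | Sum.inr (Sum.inl q) => 8*(x.2 q.1.1 : ℝ)*(x.2 q.1.2 : ℝ)
  | Sum.inr (Sum.inr m) => (4*sqnorm x.2 - 4*(dotP (omega0 j) x.1)^2) * (x.2 m : ℝ)

def unitE {b : ℕ} (k : Fin b) : Fin b → ℤ := fun i => if i = k then 1 else 0

def DegSet {b d : ℕ} (j : Fin b → Fin d → ℤ) : Set (Idx b d) :=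
  {x | ∃ α : ℤ, α ≠ 0 ∧
        ((∃ k k' : Fin b, k ≠ k' ∧
            x = α • ((unitE k' - unitE k, fun m => j k m - j k' m) : Idx b d)) ∨
         (∃ k : Fin b, x = α • ((-unitE k, fun m => j k m) : Idx b d)))}

def GenericI {b d : ℕ} (p : ℕ) (j : Fin b → Fin d → ℤ) : Prop :=
  ∀ x ∈ AmbSet p j, x ≠ 0 →
    sqnorm x.2 + (dotP (omega0 j) x.1)^2 ≠ 0 ∧
    sqnorm x.2 - (dotP (omega0 j) x.1)^2 ≠ 0 ∧
    Wfun j x ≠ 0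

def GenericII {b d : ℕ} (p : ℕ) (j : Fin b → Fin d → ℤ) : Prop :=
  ∀ E : Fin (Bprime d) → Idx b d,
    Function.Injective E →
    (∀ i, E i ∈ AmbSet p j ∧ E i ∉ DegSet j ∧ (E i).2 ≠ 0) →
    ∀ ρ : ℕ, 1 ≤ ρ → ρ ≤ Bprime d - 1 →
    ∀ r : Fin (ρ+1) → Fin (Bprime d), Function.Injective r →
    ∀ c : Fin ρ → LIdx d, Function.Injective c →
    (∀ i0 : Fin (ρ+1),
      Matrix.det (Matrix.of fun u v : Fin ρ => Lfun j (E (r (i0.succAbove u))) (c v)) ≠ 0) →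
    Matrix.det (Matrix.of fun u v : Fin (ρ+1) =>
      if h : (v : ℕ) < ρ then Lfun j (E (r u)) (c ⟨v, h⟩) else Wfun j (E (r u))) ≠ 0

def Chars {b d : ℕ} (j : Fin b → Fin d → ℤ) : Set (Idx b d) :=
  {x | dotP (omega0 j) x.1 + Real.sqrt (sqnorm x.2 + 1) = 0 ∨
       -(dotP (omega0 j) x.1) + Real.sqrt (sqnorm x.2 + 1) = 0}

def SpSet {b d : ℕ} (j : Fin b → Fin d → ℤ) : Set (Idx b d) :=
  {x | ∃ k : Fin b, x = (-unitE k, fun m => j k m) ∨ x = (unitE k, fun m => -(j k m))}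

def GenericIII {b d : ℕ} (p : ℕ) (j : Fin b → Fin d → ℤ) : Prop :=
  ∀ l : List (Idx b d), l.length = p + 1 → (∀ y ∈ l, y ∈ SpSet j) →
    l.sum ∈ Chars j → l.sum ∈ SpSet j

end NLW

namespace NLW

/-! ### Auxiliary lemmas -/

section Aux

variable {b d : ℕ}

lemma dotP_add_smul (ω : Fin b → ℝ) (u w : Fin b → ℤ) (α : ℤ) :
    dotP ω (u + α • w) = dotP ω u + α * dotP ω w := by
  simp only [dotP, Pi.add_apply, Pi.smul_apply, smul_eq_mul, Finset.mul_sum]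
  rw [← Finset.sum_add_distrib]
  apply Finset.sum_congr rfl; intros; push_cast; ring

lemma dotP_sub (ω : Fin b → ℝ) (u w : Fin b → ℤ) :
    dotP ω (u - w) = dotP ω u - dotP ω w := by
  simp only [dotP, Pi.sub_apply]
  rw [← Finset.sum_sub_distrib]
  apply Finset.sum_congr rfl; intros; push_cast; ring

lemma dotP_smul (ω : Fin b → ℝ) (w : Fin b → ℤ) (α : ℤ) :
    dotP ω (α • w) = α * dotP ω w := by
  simp only [dotP, Pi.smul_apply, smul_eq_mul, Finset.mul_sum]
  apply Finset.sum_congr rfl; intros; push_cast; ring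

lemma sqnorm_nonneg (v : Fin d → ℤ) : 0 ≤ sqnorm v :=
  Finset.sum_nonneg fun _ _ => sq_nonneg _

lemma sqnorm_zero : sqnorm (0 : Fin d → ℤ) = 0 := by simp [sqnorm]

lemma sqnorm_add_smul (u w : Fin d → ℤ) (α : ℤ) :
    sqnorm (u + α • w)
      = sqnorm u + 2*(α:ℝ)*(∑ m, (u m : ℝ)*(w m : ℝ)) + (α:ℝ)^2 * sqnorm w := by
  simp only [sqnorm, Pi.add_apply, Pi.smul_apply, smul_eq_mul, Finset.mul_sum]
  rw [← Finset.sum_add_distrib, ← Finset.sum_add_distrib]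
  apply Finset.sum_congr rfl; intros; push_cast; ring

lemma sqnorm_smul (w : Fin d → ℤ) (α : ℤ) :
    sqnorm (α • w) = (α:ℝ)^2 * sqnorm w := by
  simp only [sqnorm, Pi.smul_apply, smul_eq_mul, Finset.mul_sum]
  apply Finset.sum_congr rfl; intros; push_cast; ring

lemma sq_sum (a : Fin d → ℝ) :
    (∑ m, a m)^2 = (∑ m, (a m)^2)
      + 2 * ∑ q : {q : Fin d × Fin d // q.1 < q.2}, a q.1.1 * a q.1.2 := by
  classical
  have h0 : (∑ m, a m)^2 = ∑ q : Fin d × Fin d, a q.1 * a q.2 := by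
    rw [sq, Finset.sum_mul_sum, Fintype.sum_prod_type]
  have hsub : ∑ q : {q : Fin d × Fin d // q.1 < q.2}, a q.1.1 * a q.1.2
      = ∑ q ∈ Finset.univ.filter (fun q : Fin d × Fin d => q.1 < q.2), a q.1 * a q.2 := by
    rw [Finset.sum_subtype (p := fun q : Fin d × Fin d => q.1 < q.2)
      (Finset.univ.filter (fun q : Fin d × Fin d => q.1 < q.2))
      (by simp) (fun q : Fin d × Fin d => a q.1 * a q.2)]
  have hsplit := Finset.sum_filter_add_sum_filter_not Finset.univ
      (fun q : Fin d × Fin d => q.1 < q.2) (fun q => a q.1 * a q.2)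
  have hsplit2 := Finset.sum_filter_add_sum_filter_not
      (Finset.univ.filter (fun q : Fin d × Fin d => ¬ q.1 < q.2))
      (fun q : Fin d × Fin d => q.2 < q.1) (fun q => a q.1 * a q.2)
  rw [Finset.filter_filter, Finset.filter_filter] at hsplit2
  have hgt : ∑ q ∈ Finset.univ.filter (fun q : Fin d × Fin d => ¬ q.1 < q.2 ∧ q.2 < q.1),
        a q.1 * a q.2
      = ∑ q ∈ Finset.univ.filter (fun q : Fin d × Fin d => q.1 < q.2), a q.1 * a q.2 := by
    apply Finset.sum_nbij' (fun q => Prod.swap q) (fun q => Prod.swap q)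
    · intro q hq; simp only [Finset.mem_filter, Finset.mem_univ, true_and] at hq ⊢
      exact hq.2
    · intro q hq; simp only [Finset.mem_filter, Finset.mem_univ, true_and] at hq ⊢
      exact ⟨not_lt_of_gt hq, hq⟩
    · intro q _; simp
    · intro q _; simp
    · intro q _; simp [Prod.swap]; ring
  have hdiag : ∑ q ∈ Finset.univ.filter (fun q : Fin d × Fin d => ¬ q.1 < q.2 ∧ ¬ q.2 < q.1),
        a q.1 * a q.2 = ∑ m, (a m)^2 := by
    rw [show (Finset.univ.filter (fun q : Fin d × Fin d => ¬ q.1 < q.2 ∧ ¬ q.2 < q.1))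
        = Finset.univ.filter (fun q : Fin d × Fin d => q.1 = q.2) from ?_]
    · apply Finset.sum_nbij' (fun q => q.1) (fun m => (m, m))
      · intro q hq; simp
      · intro m _; simp
      · intro q hq; simp only [Finset.mem_filter, Finset.mem_univ, true_and] at hq
        cases q; simp_all
      · intro m _; rfl
      · intro q hq; simp only [Finset.mem_filter, Finset.mem_univ, true_and] at hq
        rw [← hq]; ring
    · apply Finset.filter_congr; intro q _
      constructor
      · rintro ⟨h1, h2⟩; exact le_antisymm (not_lt.mp h2) (not_lt.mp h1)
      · rintro h; exact ⟨by simp [h], by simp [h]⟩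
  rw [hsub, h0, ← hsplit, ← hsplit2, hgt, hdiag]; ring

lemma card_lt_subtype (d : ℕ) :
    Fintype.card {q : Fin d × Fin d // q.1 < q.2} * 2 = d * (d-1) := by
  classical
  have e1 : {q : Fin d × Fin d // q.1 < q.2} ≃ {q : Fin d × Fin d // q.2 < q.1} :=
    { toFun := fun q => ⟨q.1.swap, q.2⟩
      invFun := fun q => ⟨q.1.swap, q.2⟩
      left_inv := fun q => by cases q; simp
      right_inv := fun q => by cases q; simp }
  have e2 : {q : Fin d × Fin d // q.2 < q.1} ≃ Σ a : Fin d, {b' : Fin d // b' < a} :=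
    Equiv.subtypeProdEquivSigmaSubtype (fun a b' => b' < a)
  have h3 : ∀ a : Fin d, Fintype.card {b' : Fin d // b' < a} = (a : ℕ) := by
    intro a
    rw [Fintype.card_subtype]
    have : Finset.univ.filter (fun b' : Fin d => b' < a) = Finset.Iio a := by
      ext x; simp
    rw [this, Fin.card_Iio]
  have h4 : Fintype.card {q : Fin d × Fin d // q.1 < q.2} = ∑ a : Fin d, (a:ℕ) := by
    rw [Fintype.card_congr (e1.trans e2), Fintype.card_sigma]
    exact Finset.sum_congr rfl (fun a _ => h3 a)
  rw [h4]
  rw [Fin.sum_univ_eq_sum_range (fun i => i) d]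
  exact Finset.sum_range_id_mul_two d

lemma card_LIdx (d : ℕ) : Fintype.card (LIdx d) = Bprime d - 1 := by
  have h := card_lt_subtype d
  have h2 : (d+1)*(d+2) = d*d + 3*d + 2 := by ring
  have h3 : d*(d-1) + d = d*d := by
    cases d with
    | zero => simp
    | succ n => simp [Nat.succ_sub_one]; ring
  simp only [LIdx, Fintype.card_sum, Fintype.card_fin, Bprime]
  rw [h2]
  omega

lemma chars_sq' {D R : ℝ} (hR : 0 ≤ R + 1)
    (h : D + Real.sqrt (R + 1) = 0 ∨ -D + Real.sqrt (R + 1) = 0) :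
    D^2 = R + 1 := by
  rcases h with h | h
  · have : D = -Real.sqrt (R+1) := by linarith
    rw [this, neg_sq, Real.sq_sqrt hR]
  · have : D = Real.sqrt (R+1) := by linarith
    rw [this, Real.sq_sqrt hR]

lemma chars_sq {j : Fin b → Fin d → ℤ} {x : Idx b d} (hx : x ∈ Chars j) :
    (dotP (omega0 j) x.1)^2 = sqnorm x.2 + 1 :=
  chars_sq' (by linarith [sqnorm_nonneg x.2]) hx

lemma descend {N : ℕ} {K : Type} [Fintype K] [DecidableEq K]
    (Lr : Fin N → K → ℝ) (Wv : Fin N → ℝ) (hW : ∀ i, Wv i ≠ 0) :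
    ∀ ρ : ℕ, 1 ≤ ρ →
    ∀ (r : Fin (ρ+1) → Fin N), Function.Injective r →
    ∀ (c : Fin ρ → K), Function.Injective c →
    ∀ (β : Fin ρ → ℝ), (∀ u, Wv (r u) = ∑ v, Lr (r u) (c v) * β v) →
    ∃ ρ', 1 ≤ ρ' ∧ ρ' ≤ ρ ∧
      ∃ (r' : Fin (ρ'+1) → Fin N) (c' : Fin ρ' → K),
        Function.Injective r' ∧ Function.Injective c' ∧
        (∀ i0 : Fin (ρ'+1),
          (Matrix.of fun u v : Fin ρ' => Lr (r' (i0.succAbove u)) (c' v)).det ≠ 0) ∧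
        (Matrix.of fun u v : Fin (ρ'+1) =>
          if h : (v : ℕ) < ρ' then Lr (r' u) (c' ⟨v, h⟩) else Wv (r' u)).det = 0 := by
  intro ρ
  induction ρ using Nat.strong_induction_on with
  | _ ρ IH =>
  intro hρ r hr c hc β hβ
  by_cases hall : ∀ i0 : Fin (ρ+1),
      (Matrix.of fun u v : Fin ρ => Lr (r (i0.succAbove u)) (c v)).det ≠ 0
  · refine ⟨ρ, hρ, le_refl _, r, c, hr, hc, hall, ?_⟩
    rw [← Matrix.exists_mulVec_eq_zero_iff]
    refine ⟨(fun v : Fin (ρ+1) => if h : (v:ℕ) < ρ then β ⟨v,h⟩ else -1), ?_, ?_⟩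
    · intro h0
      have := congrFun h0 (Fin.last ρ)
      simp [Fin.last] at this
    · funext u
      simp only [Matrix.mulVec, dotProduct, Matrix.of_apply, Pi.zero_apply]
      rw [Fin.sum_univ_castSucc]
      simp only [Fin.coe_castSucc, Fin.val_last, Fin.is_lt, dif_pos, lt_irrefl, dif_neg,
        not_false_iff, Fin.eta]
      rw [← hβ u]; ring
  · push_neg at hall
    obtain ⟨i0, hdet⟩ := hall
    obtain ⟨γ, hγ, hker⟩ := (Matrix.exists_mulVec_eq_zero_iff).mpr hdet
    obtain ⟨m, rfl⟩ : ∃ m, ρ = m + 1 := ⟨ρ - 1, by omega⟩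
    have hker' : ∀ u : Fin (m+1), ∑ v, Lr (r (i0.succAbove u)) (c v) * γ v = 0 := by
      intro u
      have := congrFun hker u
      simpa [Matrix.mulVec, dotProduct] using this
    rcases Nat.eq_zero_or_pos m with hm | hm
    · subst hm
      exfalso
      have h1 : Lr (r (i0.succAbove 0)) (c 0) * γ 0 = 0 := by
        have := hker' 0
        simpa using this
      have hγ0 : γ 0 ≠ 0 := by
        intro h; apply hγ; funext v; fin_cases v; exact h
      have hL : Lr (r (i0.succAbove 0)) (c 0) = 0 :=
        by rcases mul_eq_zero.mp h1 with h | h; exact h; exact absurd h hγ0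
      have := hβ (i0.succAbove 0)
      rw [Fin.sum_univ_one, hL, zero_mul] at this
      exact hW _ this
    · obtain ⟨vstar, hγv⟩ := Function.ne_iff.mp hγ
      rw [Pi.zero_apply] at hγv
      set r' : Fin (m+1) → Fin N := r ∘ i0.succAbove with hr'def
      set c' : Fin m → K := c ∘ vstar.succAbove with hc'def
      have hr' : Function.Injective r' := hr.comp (Fin.succAbove_right_injective)
      have hc' : Function.Injective c' := hc.comp (Fin.succAbove_right_injective)
      set β' : Fin m → ℝ := fun w => β (vstar.succAbove w)
          - β vstar * γ (vstar.succAbove w) / γ vstar with hβ'def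
      have hβ' : ∀ u : Fin (m+1), Wv (r' u) = ∑ w, Lr (r' u) (c' w) * β' w := by
        intro u
        have h1 : Wv (r' u) = ∑ v, Lr (r' u) (c v) * β v := hβ (i0.succAbove u)
        have h2 : ∑ v, Lr (r' u) (c v) * γ v = 0 := hker' u
        have h3 : Wv (r' u) = ∑ v, Lr (r' u) (c v) * (β v - β vstar * γ v / γ vstar) := by
          have : ∑ v, Lr (r' u) (c v) * (β v - β vstar * γ v / γ vstar)
              = (∑ v, Lr (r' u) (c v) * β v)
                - (β vstar / γ vstar) * ∑ v, Lr (r' u) (c v) * γ v := by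
            rw [Finset.mul_sum, ← Finset.sum_sub_distrib]
            apply Finset.sum_congr rfl
            intros; ring
          rw [this, h2, mul_zero, sub_zero, h1]
        rw [h3, Fin.sum_univ_succAbove _ vstar]
        have hz : Lr (r' u) (c vstar) * (β vstar - β vstar * γ vstar / γ vstar) = 0 := by
          have : β vstar - β vstar * γ vstar / γ vstar = 0 := by
            field_simp
            ring
          rw [this, mul_zero]
        rw [hz, zero_add]
        apply Finset.sum_congr rfl
        intro w _
        simp only [hc'def, hβ'def, Function.comp_apply]
      obtain ⟨ρ', h1, h2, rest⟩ := IH m (by omega) hm r' hr' c' hc' β' hβ'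
      exact ⟨ρ', h1, le_trans h2 (by omega), rest⟩

/-- The monomial vector at a base point. -/
noncomputable def Vmon {b d : ℕ} (x₀ : Idx b d) : LIdx d → ℝ :=
  fun i => match i with
  | Sum.inl m => ((x₀.2 m : ℝ))^2
  | Sum.inr (Sum.inl q) => (x₀.2 q.1.1 : ℝ) * (x₀.2 q.1.2 : ℝ)
  | Sum.inr (Sum.inr m) => (x₀.2 m : ℝ)

lemma char_rel {j : Fin b → Fin d → ℤ} {x x₀ : Idx b d}
    (hx : x ∈ Chars j) (hx0 : x₀ ∈ Chars j) :
    (∑ i : LIdx d, Lfun j (x - x₀) i * Vmon x₀ i) + Wfun j (x - x₀) = 0 := by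
  have hB := chars_sq hx0
  have hA := chars_sq hx
  have hx1 : x.1 = x₀.1 + (1:ℤ) • (x - x₀).1 := by
    simp
  have hx2 : x.2 = x₀.2 + (1:ℤ) • (x - x₀).2 := by
    simp
  rw [hx1, dotP_add_smul] at hA
  rw [hx2, sqnorm_add_smul] at hA
  push_cast at hA
  set P := dotP (omega0 j) x₀.1 with hP
  set Dd := dotP (omega0 j) (x - x₀).1 with hDd
  set J := ∑ m, ((x₀.2 m : ℝ) * ((x - x₀).2 m : ℝ)) with hJ
  set Q := ∑ m, ((x₀.2 m : ℝ) * ((x - x₀).2 m : ℝ))^2 with hQ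
  -- hA : (P + 1*Dd)^2 = sqnorm x₀.2 + 2*1*J + 1^2*sqnorm Δ.2 + 1
  have hA2 : (P + Dd)^2 = sqnorm x₀.2 + 2*J + sqnorm (x - x₀).2 + 1 := by
    linear_combination hA
  have h3 : 2*P*Dd = 2*J + sqnorm (x - x₀).2 - Dd^2 := by
    linear_combination hA2 - hB
  have h4 : 4*(sqnorm x₀.2 + 1)*Dd^2 = (2*J + sqnorm (x - x₀).2 - Dd^2)^2 := by
    linear_combination (2*P*Dd + (2*J + sqnorm (x - x₀).2 - Dd^2))*h3 - 4*Dd^2*hB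
  have hs := sq_sum (fun m => (x₀.2 m : ℝ) * ((x - x₀).2 m : ℝ))
  have key : (∑ i : LIdx d, Lfun j (x - x₀) i * Vmon x₀ i)
      = (4*Q - 4*Dd^2*(sqnorm x₀.2)) + (4*J^2 - 4*Q)
        + (4*(sqnorm (x - x₀).2) - 4*Dd^2) * J := by
    rw [Fintype.sum_sum_type, Fintype.sum_sum_type]
    have e1 : (∑ m : Fin d, Lfun j (x - x₀) (Sum.inl m) * Vmon x₀ (Sum.inl m))
        = 4*Q - 4*Dd^2*(sqnorm x₀.2) := by
      simp only [Lfun, Vmon]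
      calc ∑ m : Fin d, (4*(((x - x₀).2 m : ℝ))^2 - 4*Dd^2) * ((x₀.2 m : ℝ))^2
          = ∑ m : Fin d, (4*(((x₀.2 m : ℝ) * ((x - x₀).2 m : ℝ)))^2
              - 4*Dd^2*((x₀.2 m : ℝ))^2) := by
            apply Finset.sum_congr rfl; intros; ring
        _ = 4*Q - 4*Dd^2*(sqnorm x₀.2) := by
            rw [Finset.sum_sub_distrib, ← Finset.mul_sum, ← Finset.mul_sum]
            rw [hQ]; rfl
    have e2 : (∑ q : {q : Fin d × Fin d // q.1 < q.2},
          Lfun j (x - x₀) (Sum.inr (Sum.inl q)) * Vmon x₀ (Sum.inr (Sum.inl q)))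
        = 4*J^2 - 4*Q := by
      simp only [Lfun, Vmon]
      have h8 : (∑ q : {q : Fin d × Fin d // q.1 < q.2},
            8*((x - x₀).2 q.1.1 : ℝ)*((x - x₀).2 q.1.2 : ℝ)
              * ((x₀.2 q.1.1 : ℝ) * (x₀.2 q.1.2 : ℝ)))
          = 8 * ∑ q : {q : Fin d × Fin d // q.1 < q.2},
              ((x₀.2 q.1.1 : ℝ) * ((x - x₀).2 q.1.1 : ℝ))
                * ((x₀.2 q.1.2 : ℝ) * ((x - x₀).2 q.1.2 : ℝ)) := by
        rw [Finset.mul_sum]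
        apply Finset.sum_congr rfl; intros; ring
      rw [show (∑ q : {q : Fin d × Fin d // q.1 < q.2},
            8*((x - x₀).2 q.1.1 : ℝ)*((x - x₀).2 q.1.2 : ℝ)
              * ((x₀.2 q.1.1 : ℝ) * (x₀.2 q.1.2 : ℝ))) = _ from h8]
      rw [← hJ, ← hQ] at hs
      linarith [hs]
    have e3 : (∑ m : Fin d, Lfun j (x - x₀) (Sum.inr (Sum.inr m)) * Vmon x₀ (Sum.inr (Sum.inr m)))
        = (4*(sqnorm (x - x₀).2) - 4*Dd^2) * J := by
      simp only [Lfun, Vmon]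
      rw [hJ, Finset.mul_sum]
      apply Finset.sum_congr rfl; intros; ring
    rw [e1, e2, e3]; ring
  rw [key]
  have hW : Wfun j (x - x₀) = (sqnorm (x - x₀).2 - Dd^2)^2 - 4*Dd^2 := rfl
  rw [hW]
  linear_combination -h4

lemma line_unique {j : Fin b → Fin d → ℤ} {x x' x₀ g : Idx b d} {α α' : ℤ}
    (hx : x ∈ Chars j) (hx' : x' ∈ Chars j) (hx0 : x₀ ∈ Chars j)
    (hα : α ≠ 0) (hα' : α' ≠ 0)
    (hxg : x - x₀ = α • g) (hx'g : x' - x₀ = α' • g)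
    (hC2 : sqnorm g.2 - (dotP (omega0 j) g.1)^2 ≠ 0) : x = x' := by
  have key : ∀ (β : ℤ) (y : Idx b d), β ≠ 0 → y ∈ Chars j → y - x₀ = β • g →
      (β:ℝ) * (sqnorm g.2 - (dotP (omega0 j) g.1)^2)
        = 2*(dotP (omega0 j) x₀.1)*(dotP (omega0 j) g.1)
          - 2*(∑ m, (x₀.2 m : ℝ)*(g.2 m : ℝ)) := by
    intro β y hβ hy hyg
    have hy1 : y.1 = x₀.1 + β • g.1 := by
      have h := congrArg Prod.fst hyg
      simp only [Prod.fst_sub, Prod.smul_fst] at h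
      rw [← h]; abel
    have hy2 : y.2 = x₀.2 + β • g.2 := by
      have h := congrArg Prod.snd hyg
      simp only [Prod.snd_sub, Prod.smul_snd] at h
      rw [← h]; abel
    have hyc := chars_sq hy
    rw [hy1, dotP_add_smul, hy2, sqnorm_add_smul] at hyc
    have hBc := chars_sq hx0
    have hβR : (β:ℝ) ≠ 0 := Int.cast_ne_zero.mpr hβ
    have h5 : (β:ℝ) * ((β:ℝ)*(sqnorm g.2 - (dotP (omega0 j) g.1)^2)
        - (2*(dotP (omega0 j) x₀.1)*(dotP (omega0 j) g.1)
            - 2*(∑ m, (x₀.2 m : ℝ)*(g.2 m : ℝ)))) = 0 := by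
      linear_combination hBc - hyc
    rcases mul_eq_zero.mp h5 with h | h
    · exact absurd h hβR
    · linarith
  have h6 := key α x hα hx hxg
  have h7 := key α' x' hα' hx' hx'g
  have : (α:ℝ) * (sqnorm g.2 - (dotP (omega0 j) g.1)^2)
      = (α':ℝ) * (sqnorm g.2 - (dotP (omega0 j) g.1)^2) := by rw [h6, h7]
  have hαα : (α:ℝ) = (α':ℝ) := mul_right_cancel₀ hC2 this
  have hαα' : α = α' := by exact_mod_cast hαα
  have : x - x₀ = x' - x₀ := by rw [hxg, hx'g, hαα']
  exact sub_left_inj.mp this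

lemma gamma_neg {p : ℕ} {j : Fin b → Fin d → ℤ} {x : Idx b d}
    (h : x ∈ Gamma p j) : -x ∈ Gamma p j := by
  obtain ⟨P, P', hsum, h1, h2⟩ := h
  refine ⟨P', P, ?_, ?_, ?_⟩
  · rw [← hsum]; apply Finset.sum_congr rfl; intros; omega
  · rw [Prod.fst_neg, h1]; funext k; simp only [Pi.neg_apply]; ring
  · rw [Prod.snd_neg, h2]; funext m; simp only [Pi.neg_apply]
    rw [← Finset.sum_neg_distrib]
    apply Finset.sum_congr rfl; intros; ring

lemma deg_choice {j : Fin b → Fin d → ℤ} {x : Idx b d} (h : x ∈ DegSet j) :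
    ∃ pr : Fin b × Fin b, ∃ α : ℤ, α ≠ 0 ∧
      ((pr.1 ≠ pr.2 ∧
          x = α • ((unitE pr.2 - unitE pr.1, fun m => j pr.1 m - j pr.2 m) : Idx b d)) ∨
       (pr.1 = pr.2 ∧ x = α • ((-unitE pr.1, fun m => j pr.1 m) : Idx b d))) := by
  obtain ⟨α, hα, h⟩ := h
  rcases h with ⟨k, k', hkk, hx⟩ | ⟨k, hx⟩
  · exact ⟨(k, k'), α, hα, Or.inl ⟨hkk, hx⟩⟩
  · exact ⟨(k, k), α, hα, Or.inr ⟨rfl, hx⟩⟩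

end Aux

/-- Γ-connected subsets of the characteristics have size at most
`B = (d+1)(d+2)/2 + b(b+1) < 3(d²+b²)`. -/
theorem connected_sets_on_characteristics_are_small
    {b d p : ℕ} (hb : 1 ≤ b) (hd : 1 ≤ d) (hp : 1 ≤ p)
    (j : Fin b → Fin d → ℤ) (hdist : Function.Injective j) (hnz : ∀ k, j k ≠ 0)
    (hI : GenericI p j) (hII : GenericII p j)
    (S : Set (Idx b d)) (hS : S ⊆ Chars j)
    (hconn : ∀ x ∈ S, ∀ y ∈ S,
      Relation.ReflTransGen (fun u v => u ∈ S ∧ v ∈ S ∧ u ≠ v ∧ u - v ∈ Gamma p j) x y) :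
    S.Finite ∧ S.ncard ≤ Bconst b d ∧ S.ncard < 3 * (d ^ 2 + b ^ 2) := by
  classical
  set Rel : Idx b d → Idx b d → Prop :=
    fun u v => u ∈ S ∧ v ∈ S ∧ u ≠ v ∧ u - v ∈ Gamma p j with hRel
  -- ============ The key cardinality bound ============
  have key : ∀ T : Finset (Idx b d), ↑T ⊆ S → T.card ≤ Bconst b d := by
    intro T hTS
    by_contra hcard
    push_neg at hcard
    obtain ⟨T₁, hT₁sub, hT₁card⟩ :=
      Finset.exists_subset_card_eq (show Bconst b d + 1 ≤ T.card by omega)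
    have hT₁S : ↑T₁ ⊆ S := fun z hz => hTS (hT₁sub hz)
    obtain ⟨x₀, hx₀T₁⟩ := Finset.card_pos.mp (show 0 < T₁.card by omega)
    have hx₀S : x₀ ∈ S := hT₁S hx₀T₁
    -- crossing lemma
    have hcross : ∀ a z : Idx b d, Relation.ReflTransGen Rel a z →
        ∀ T' : Finset (Idx b d), a ∈ T' → z ∉ T' →
        ∃ u v, u ∈ T' ∧ v ∉ T' ∧ Rel u v := by
      intro a z h
      induction h with
      | refl => intro T' ha hz; exact absurd ha hz
      | @tail bb cc hab hbc ih =>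
        intro T' ha hz
        by_cases hbb : bb ∈ T'
        · exact ⟨bb, cc, hbb, hz, hbc⟩
        · exact ih T' ha hbb
    -- growing a connected set
    have grow : ∀ n : ℕ, 1 ≤ n → n ≤ Bconst b d + 1 → ∃ T' : Finset (Idx b d),
        ↑T' ⊆ S ∧ x₀ ∈ T' ∧ T'.card = n ∧
        (∀ x ∈ T', ∀ y ∈ T', ∃ l : List (Idx b d), l.length ≤ n - 1 ∧
            (∀ z ∈ l, z ∈ Gamma p j) ∧ x - y = l.sum) := by
      intro n
      induction n with
      | zero => intro h; omega
      | succ n IH =>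
        intro h1 h2
        rcases Nat.eq_zero_or_pos n with hn | hn
        · subst hn
          refine ⟨{x₀}, ?_, Finset.mem_singleton_self x₀, Finset.card_singleton x₀, ?_⟩
          · intro z hz
            rw [Finset.coe_singleton, Set.mem_singleton_iff] at hz
            rw [hz]; exact hx₀S
          · intro x hxm y hym
            rw [Finset.mem_singleton] at hxm hym
            subst hxm; subst hym
            exact ⟨[], by simp, by simp, by simp⟩
        · obtain ⟨T', hT'S, hx₀T', hcardn, hpair⟩ := IH (by omega) (by omega)
          have hex : ∃ y ∈ T₁, y ∉ T' := by
            by_contra hco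
            push_neg at hco
            have hsub : T₁ ⊆ T' := fun z hz => hco z hz
            have := Finset.card_le_card hsub
            omega
          obtain ⟨y, hyT₁, hyT'⟩ := hex
          obtain ⟨u, v, huT', hvT', hedge⟩ :=
            hcross x₀ y (hconn x₀ hx₀S y (hT₁S hyT₁)) T' hx₀T' hyT'
          obtain ⟨huS, hvS, huv, hΓ⟩ := hedge
          refine ⟨insert v T', ?_, Finset.mem_insert_of_mem hx₀T', ?_, ?_⟩
          · intro z hz
            rw [Finset.coe_insert, Set.mem_insert_iff] at hz
            rcases hz with hz | hz
            · rw [hz]; exact hvS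
            · exact hT'S hz
          · rw [Finset.card_insert_of_notMem hvT', hcardn]
          · intro x hxm yy hym
            rw [Finset.mem_insert] at hxm hym
            have hvu : v - u ∈ Gamma p j := by
              have := gamma_neg hΓ
              simpa using this
            rcases hxm with rfl | hx <;> rcases hym with rfl | hy
            · exact ⟨[], by simp, by simp, by simp⟩
            · -- x = v, yy ∈ T'
              obtain ⟨l, hl1, hl2, hl3⟩ := hpair u huT' yy hy
              refine ⟨(x - u) :: l, ?_, ?_, ?_⟩
              · simp only [List.length_cons]; omega
              · intro z hz
                rcases List.mem_cons.mp hz with hz | hz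
                · rw [hz]; exact hvu
                · exact hl2 z hz
              · rw [List.sum_cons, ← hl3]; abel
            · -- x ∈ T', yy = v
              obtain ⟨l, hl1, hl2, hl3⟩ := hpair x hx u huT'
              refine ⟨l ++ [u - yy], ?_, ?_, ?_⟩
              · simp only [List.length_append, List.length_singleton]; omega
              · intro z hz
                rcases List.mem_append.mp hz with hz | hz
                · exact hl2 z hz
                · rw [List.mem_singleton.mp hz]; exact hΓ
              · rw [List.sum_append, List.sum_singleton, ← hl3]; abel
            · obtain ⟨l, hl1, hl2, hl3⟩ := hpair x hx yy hy
              exact ⟨l, by omega, hl2, hl3⟩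
    obtain ⟨T', hT'S, hx₀T', hT'card, hT'pair⟩ := grow (Bconst b d + 1) (by omega) le_rfl
    have hdiff : ∀ x ∈ T', ∀ y ∈ T', x - y ∈ AmbSet p j := by
      intro x hx y hy
      obtain ⟨l, hl1, hl2, hl3⟩ := hT'pair x hx y hy
      rw [Nat.add_sub_cancel] at hl1
      exact ⟨l, hl1, hl2, hl3⟩
    have hchars : ∀ x ∈ T', x ∈ Chars j := fun x hx => hS (hT'S hx)
    have hx₀C : x₀ ∈ Chars j := hchars x₀ hx₀T'
    -- GenericI for differences
    have hGI : ∀ x ∈ T', x ≠ x₀ →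
        sqnorm (x - x₀).2 + (dotP (omega0 j) (x - x₀).1)^2 ≠ 0 ∧
        sqnorm (x - x₀).2 - (dotP (omega0 j) (x - x₀).1)^2 ≠ 0 ∧
        Wfun j (x - x₀) ≠ 0 := by
      intro x hx hne
      exact hI (x - x₀) (hdiff x hx x₀ hx₀T') (sub_ne_zero_of_ne hne)
    -- the erased set
    set D : Finset (Idx b d) := T'.erase x₀ with hD
    have hDcard : D.card = Bconst b d := by
      rw [hD, Finset.card_erase_of_mem hx₀T', hT'card, Nat.add_sub_cancel]
    have hDT' : ∀ x ∈ D, x ∈ T' ∧ x ≠ x₀ := by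
      intro x hx
      rw [hD, Finset.mem_erase] at hx
      exact ⟨hx.2, hx.1⟩
    -- bad and good points
    set badP : Idx b d → Prop := fun x => x - x₀ ∈ DegSet j ∨ (x - x₀).2 = 0 with hbadP
    set bad : Finset (Idx b d) := D.filter badP with hbad
    set good : Finset (Idx b d) := D.filter (fun x => ¬ badP x) with hgood
    -- uniqueness for Δj = 0 points
    have hzero_unique : ∀ x ∈ D, ∀ x' ∈ D, (x - x₀).2 = 0 → (x' - x₀).2 = 0 → x = x' := by
      intro x hx x' hx' h2 h2'
      by_contra hne
      obtain ⟨hxT', hxne⟩ := hDT' x hx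
      obtain ⟨hx'T', hx'ne⟩ := hDT' x' hx'
      -- D values
      have hdval : ∀ z : Idx b d, z ∈ T' → z ≠ x₀ → (z - x₀).2 = 0 →
          dotP (omega0 j) (z - x₀).1 = -2 * dotP (omega0 j) x₀.1 := by
        intro z hz hzne hz2
        have hz2' : z.2 = x₀.2 := by
          have : z.2 - x₀.2 = 0 := hz2
          exact sub_eq_zero.mp this
        have hc := chars_sq (hchars z hz)
        have hc0 := chars_sq hx₀C
        have hzd : dotP (omega0 j) z.1
            = dotP (omega0 j) x₀.1 + dotP (omega0 j) (z - x₀).1 := by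
          have e : (z - x₀).1 = z.1 - x₀.1 := rfl
          rw [e, dotP_sub]; ring
        rw [hzd, hz2'] at hc
        have hDne : dotP (omega0 j) (z - x₀).1 ≠ 0 := by
          have h := (hGI z hz hzne).2.1
          rw [hz2, sqnorm_zero] at h
          intro h0; rw [h0] at h; simp at h
        have hfac : dotP (omega0 j) (z - x₀).1
            * (dotP (omega0 j) (z - x₀).1 + 2 * dotP (omega0 j) x₀.1) = 0 := by
          linear_combination hc - hc0
        rcases mul_eq_zero.mp hfac with h | h
        · exact absurd h hDne
        · linarith
      have hdx := hdval x hxT' hxne h2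
      have hdx' := hdval x' hx'T' hx'ne h2'
      -- now x - x' violates GenericI (i)
      have hmem : x - x' ∈ AmbSet p j := hdiff x hxT' x' hx'T'
      have hne0 : x - x' ≠ 0 := sub_ne_zero_of_ne hne
      have h1 := (hI (x - x') hmem hne0).1
      apply h1
      have hsnd : (x - x').2 = 0 := by
        have e1 : x.2 = x₀.2 := sub_eq_zero.mp h2
        have e2 : x'.2 = x₀.2 := sub_eq_zero.mp h2'
        show x.2 - x'.2 = 0
        rw [e1, e2, sub_self]
      have hfst : dotP (omega0 j) (x - x').1 = 0 := by
        have : (x - x').1 = (x - x₀).1 - (x' - x₀).1 := by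
          show x.1 - x'.1 = (x.1 - x₀.1) - (x'.1 - x₀.1)
          abel
        rw [this, dotP_sub, hdx, hdx']
        ring
      rw [hsnd, hfst, sqnorm_zero]
      norm_num
    -- uniqueness along degenerate lines
    have hline : ∀ x ∈ D, ∀ x' ∈ D, ∀ g : Idx b d, ∀ α α' : ℤ, α ≠ 0 → α' ≠ 0 →
        x - x₀ = α • g → x' - x₀ = α' • g → x = x' := by
      intro x hx x' hx' g α α' hα hα' hxg hx'g
      obtain ⟨hxT', hxne⟩ := hDT' x hx
      obtain ⟨hx'T', hx'ne⟩ := hDT' x' hx'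
      have hC2 : sqnorm g.2 - (dotP (omega0 j) g.1)^2 ≠ 0 := by
        have h := (hGI x hxT' hxne).2.1
        rw [hxg] at h
        have hfst : ((α • g : Idx b d)).1 = α • g.1 := rfl
        have hsnd : ((α • g : Idx b d)).2 = α • g.2 := rfl
        rw [hfst, hsnd, sqnorm_smul, dotP_smul] at h
        intro h0
        apply h
        rw [mul_pow]
        rw [show (α:ℝ)^2 * sqnorm g.2 - (α:ℝ)^2 * (dotP (omega0 j) g.1)^2
            = (α:ℝ)^2 * (sqnorm g.2 - (dotP (omega0 j) g.1)^2) from by ring, h0, mul_zero]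
      exact line_unique (hchars x hxT') (hchars x' hx'T') hx₀C hα hα' hxg hx'g hC2
    -- bound the number of bad points
    have hbadcard : bad.card ≤ b*b + 1 := by
      have hinj : Set.InjOn (fun x : Idx b d =>
          if (x - x₀).2 = 0 then (Sum.inr () : (Fin b × Fin b) ⊕ Unit)
          else if hdeg : x - x₀ ∈ DegSet j then
            Sum.inl (Classical.choose (deg_choice hdeg))
          else Sum.inr ()) ↑bad := by
        intro x hxm x' hx'm hfeq
        simp only at hfeq
        rw [hbad, Finset.coe_filter, Set.mem_setOf_eq] at hxm hx'm
        obtain ⟨hxD, hxbad⟩ := hxm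
        obtain ⟨hx'D, hx'bad⟩ := hx'm
        by_cases h2 : (x - x₀).2 = 0 <;> by_cases h2' : (x' - x₀).2 = 0
        · exact hzero_unique x hxD x' hx'D h2 h2'
        · exfalso
          rw [if_pos h2, if_neg h2'] at hfeq
          have hdeg' : x' - x₀ ∈ DegSet j := by
            rcases hx'bad with h | h
            · exact h
            · exact absurd h h2'
          rw [dif_pos hdeg'] at hfeq
          cases hfeq
        · exfalso
          rw [if_neg h2, if_pos h2'] at hfeq
          have hdeg : x - x₀ ∈ DegSet j := by
            rcases hxbad with h | h
            · exact h
            · exact absurd h h2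
          rw [dif_pos hdeg] at hfeq
          cases hfeq
        · have hdeg : x - x₀ ∈ DegSet j := by
            rcases hxbad with h | h
            · exact h
            · exact absurd h h2
          have hdeg' : x' - x₀ ∈ DegSet j := by
            rcases hx'bad with h | h
            · exact h
            · exact absurd h h2'
          rw [if_neg h2, if_neg h2', dif_pos hdeg, dif_pos hdeg'] at hfeq
          have hpr : Classical.choose (deg_choice hdeg)
              = Classical.choose (deg_choice hdeg') := Sum.inl_injective hfeq
          obtain ⟨α, hα, hspec⟩ := Classical.choose_spec (deg_choice hdeg)
          obtain ⟨α', hα', hspec'⟩ := Classical.choose_spec (deg_choice hdeg')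
          rw [hpr] at hspec
          set pr := Classical.choose (deg_choice hdeg') with hprdef
          rcases hspec with ⟨hne, hxg⟩ | ⟨heq, hxg⟩ <;>
            rcases hspec' with ⟨hne', hx'g⟩ | ⟨heq', hx'g⟩
          · exact hline x hxD x' hx'D _ α α' hα hα' hxg hx'g
          · exact absurd heq' hne
          · exact absurd heq hne'
          · exact hline x hxD x' hx'D _ α α' hα hα' hxg hx'g
      calc bad.card ≤ (Finset.univ : Finset ((Fin b × Fin b) ⊕ Unit)).card :=
            Finset.card_le_card_of_injOn _ (fun x _ => Finset.mem_univ _) hinj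
        _ = b*b + 1 := by
            simp [Fintype.card_sum, Fintype.card_prod]
    -- good points are plentiful
    have hgoodcard : Bprime d ≤ good.card := by
      have hpart := Finset.card_filter_add_card_filter_not (s := D) (p := badP)
      have : bad.card + good.card = Bconst b d := by
        rw [hbad, hgood]
        rw [hDcard] at hpart
        exact hpart
      have hBc : Bconst b d = Bprime d + b*(b+1) := rfl
      have hbb : b*(b+1) = b*b + b := by ring
      omega
    obtain ⟨G1, hG1sub, hG1card⟩ := Finset.exists_subset_card_eq hgoodcard
    -- the family E
    set en := G1.equivFinOfCardEq hG1card with hen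
    set E : Fin (Bprime d) → Idx b d := fun u => ((en.symm u : Idx b d)) - x₀ with hE
    have hG1good : ∀ z ∈ G1, z ∈ T' ∧ z ≠ x₀ ∧ ¬ badP z := by
      intro z hz
      have := hG1sub hz
      rw [hgood, Finset.mem_filter] at this
      obtain ⟨hzD, hznb⟩ := this
      obtain ⟨hzT, hzne⟩ := hDT' z hzD
      exact ⟨hzT, hzne, hznb⟩
    have hEinj : Function.Injective E := by
      intro u v huv
      rw [hE] at huv
      have : (en.symm u : Idx b d) = (en.symm v : Idx b d) := by
        have := sub_left_inj.mp huv
        exact this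
      exact en.symm.injective (Subtype.coe_injective this)
    have hEcond : ∀ i, E i ∈ AmbSet p j ∧ E i ∉ DegSet j ∧ (E i).2 ≠ 0 := by
      intro i
      obtain ⟨hzT, hzne, hznb⟩ := hG1good _ (en.symm i).2
      have hznb' : ¬ ((((en.symm i : Idx b d)) - x₀) ∈ DegSet j
          ∨ (((en.symm i : Idx b d)) - x₀).2 = 0) := hznb
      push_neg at hznb'
      exact ⟨hdiff _ hzT x₀ hx₀T', hznb'.1, hznb'.2⟩
    -- rows
    set Lr : Fin (Bprime d) → LIdx d → ℝ := fun i k => Lfun j (E i) k with hLr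
    set Wv : Fin (Bprime d) → ℝ := fun i => Wfun j (E i) with hWv
    have hWne : ∀ i, Wv i ≠ 0 := by
      intro i
      obtain ⟨hzT, hzne, _⟩ := hG1good _ (en.symm i).2
      exact (hGI _ hzT hzne).2.2
    -- the linear relations
    have hrel : ∀ i, (∑ k : LIdx d, Lr i k * Vmon x₀ k) + Wv i = 0 := by
      intro i
      obtain ⟨hzT, hzne, _⟩ := hG1good _ (en.symm i).2
      exact char_rel (hchars _ hzT) hx₀C
    -- set up the descent
    have hB3 : 3 ≤ Bprime d := by
      have h6 : 2*3 ≤ (d+1)*(d+2) := by nlinarith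
      rw [Bprime]
      omega
    have hBp : (Bprime d - 1) + 1 = Bprime d := by omega
    set ce : Fin (Bprime d - 1) ≃ LIdx d :=
      (Fintype.equivFinOfCardEq (card_LIdx d)).symm with hce
    set r0 : Fin ((Bprime d - 1) + 1) → Fin (Bprime d) := fun u => Fin.cast hBp u with hr0
    have hr0inj : Function.Injective r0 := fun u v h => by
      rw [hr0] at h
      exact Fin.cast_injective hBp h
    set β0 : Fin (Bprime d - 1) → ℝ := fun v => -(Vmon x₀ (ce v)) with hβ0
    have hβ0rel : ∀ u, Wv (r0 u) = ∑ v, Lr (r0 u) (ce v) * β0 v := by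
      intro u
      have h1 := hrel (r0 u)
      have h2 : ∑ v, Lr (r0 u) (ce v) * β0 v
          = ∑ k : LIdx d, Lr (r0 u) k * (-(Vmon x₀ k)) := by
        rw [hβ0]
        exact Equiv.sum_comp ce (fun k => Lr (r0 u) k * (-(Vmon x₀ k)))
      rw [h2]
      have : ∑ k : LIdx d, Lr (r0 u) k * (-(Vmon x₀ k))
          = -(∑ k : LIdx d, Lr (r0 u) k * Vmon x₀ k) := by
        rw [← Finset.sum_neg_distrib]
        apply Finset.sum_congr rfl; intros; ring
      rw [this]
      linarith
    obtain ⟨ρ', hρ'1, hρ'le, r', c', hr', hc', hminors, hdet0⟩ :=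
      descend Lr Wv hWne (Bprime d - 1) (by omega) r0 hr0inj ce ce.injective β0 hβ0rel
    have := hII E hEinj hEcond ρ' hρ'1 (by omega) r' hr' c' hc' hminors
    exact this hdet0
  -- ============ wrap-up ============
  have hfin : S.Finite := by
    by_contra hinf
    obtain ⟨T, hTsub, hTcard⟩ :=
      Set.Infinite.exists_subset_card_eq hinf (Bconst b d + 1)
    have := key T hTsub
    omega
  have hncard : S.ncard ≤ Bconst b d := by
    have h1 := key hfin.toFinset (by rw [Set.Finite.coe_toFinset])
    rwa [Set.ncard_eq_toFinset_card S hfin]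
  refine ⟨hfin, hncard, ?_⟩
  have h1 : (d+1)*(d+2) ≤ 6*(d*d) := by nlinarith
  have h2 : b*(b+1) + 1 ≤ 3*(b*b) := by nlinarith
  have h3 : d^2 = d*d := by ring
  have h4 : b^2 = b*b := by ring
  have hBc : Bconst b d = (d+1)*(d+2)/2 + b*(b+1) := rfl
  rw [h3, h4]
  omega

end NLW
end

section
/- Let b, d ≥ 1, let ω ∈ ℝ^b, n, Δn ∈ ℝ^b, j, Δj ∈ ℝ^d, and ε, ε' ∈ {+1, −1}. Assume ε(n·ω) + √(|j|²+1) = 0 and ε'((n+Δn)·ω) + √(|j+Δj|²+1) = 0. Then (2⟨j,Δj⟩ + |Δj|² − (Δn·ω)²)² = 4(Δn·ω)²(|j|²+1); equivalently, writing j = (j_1,…,j_d) and Δj = (Δj_1,…,Δj_d), one has Σ_{m=1}^d a_m j_m² + Σ_{1≤m<m'≤d} b_{mm'} j_m j_{m'} + Σ_{m=1}^d c_m j_m + W = 0, where a_m = 4(Δj_m)² − 4(Δn·ω)², b_{mm'} = 8 Δj_m Δj_{m'}, c_m = (4|Δj|² − 4(Δn·ω)²)Δj_m, and W = (|Δj|²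 − (Δn·ω)²)² − 4(Δn·ω)². -/
open scoped BigOperators

lemma sq_sum_split {d : ℕ} (f : Fin d → ℝ) :
    (∑ m, f m)^2 = (∑ m, (f m)^2)
      + 2 * ∑ q : {q : Fin d × Fin d // q.1 < q.2}, f q.1.1 * f q.1.2 := by
  classical
  have h1 : (∑ m, f m)^2 = ∑ p : Fin d × Fin d, f p.1 * f p.2 := by
    rw [sq, Finset.sum_mul_sum, Fintype.sum_prod_type]
  have hsub : (∑ q : {q : Fin d × Fin d // q.1 < q.2}, f q.1.1 * f q.1.2)
      = ∑ p ∈ Finset.univ.filter (fun p : Fin d × Fin d => p.1 < p.2), f p.1 * f p.2 := by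
    exact (Finset.sum_subtype (p := fun q : Fin d × Fin d => q.1 < q.2) (Finset.univ.filter (fun p : Fin d × Fin d => p.1 < p.2)) (fun x => by simp) (fun p : Fin d × Fin d => f p.1 * f p.2)).symm
  have hswap : (∑ p ∈ Finset.univ.filter (fun p : Fin d × Fin d => p.2 < p.1), f p.1 * f p.2)
      = ∑ p ∈ Finset.univ.filter (fun p : Fin d × Fin d => p.1 < p.2), f p.1 * f p.2 := by
    apply Finset.sum_nbij' (fun p => Prod.swap p) (fun p => Prod.swap p) <;>
      simp [mul_comm]
  have hdiag : (∑ p ∈ Finset.univ.filter (fun p : Fin d × Fin d => p.1 = p.2), f p.1 * f p.2)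
      = ∑ m, (f m)^2 := by
    rw [Finset.sum_filter]
    rw [Fintype.sum_prod_type]
    simp [sq, Finset.sum_ite_eq', mul_comm]
  have hsplit : (∑ p : Fin d × Fin d, f p.1 * f p.2)
      = (∑ p ∈ Finset.univ.filter (fun p : Fin d × Fin d => p.1 < p.2), f p.1 * f p.2)
      + ((∑ p ∈ Finset.univ.filter (fun p : Fin d × Fin d => p.2 < p.1), f p.1 * f p.2)
      + (∑ p ∈ Finset.univ.filter (fun p : Fin d × Fin d => p.1 = p.2), f p.1 * f p.2)) := by
    rw [← Finset.sum_filter_add_sum_filter_not Finset.univ (fun p : Fin d × Fin d => p.1 < p.2)]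
    congr 1
    rw [← Finset.sum_filter_add_sum_filter_not
      (Finset.univ.filter (fun p : Fin d × Fin d => ¬ p.1 < p.2))
      (fun p : Fin d × Fin d => p.2 < p.1)]
    congr 1
    · congr 1; ext p; simp; intro h; omega
    · congr 1; ext p; simp; constructor
      · rintro ⟨h1, h2⟩; omega
      · intro h; omega
  rw [h1, hsplit, hswap, hdiag, hsub]; ring

/-- two points on the characteristics differing by (Δn, Δj) satisfy the
quadratic equation obtained by eliminating the n-variables and squaring. -/
theorem characteristic_difference_quadratic_equation
    {b d : ℕ} (hb : 1 ≤ b) (hd : 1 ≤ d)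
    (ω n Δn : Fin b → ℝ) (j Δj : Fin d → ℝ) (ε ε' : ℝ)
    (hε : ε = 1 ∨ ε = -1) (hε' : ε' = 1 ∨ ε' = -1)
    (h1 : ε * (∑ k, n k * ω k) + Real.sqrt ((∑ m, (j m)^2) + 1) = 0)
    (h2 : ε' * (∑ k, (n k + Δn k) * ω k) + Real.sqrt ((∑ m, (j m + Δj m)^2) + 1) = 0) :
    (2 * (∑ m, j m * Δj m) + (∑ m, (Δj m)^2) - (∑ k, Δn k * ω k)^2)^2
      = 4 * (∑ k, Δn k * ω k)^2 * ((∑ m, (j m)^2) + 1) ∧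
    (∑ m, (4 * (Δj m)^2 - 4 * (∑ k, Δn k * ω k)^2) * (j m)^2)
      + (∑ q : {q : Fin d × Fin d // q.1 < q.2},
          8 * Δj q.1.1 * Δj q.1.2 * j q.1.1 * j q.1.2)
      + (∑ m, (4 * (∑ m', (Δj m')^2) - 4 * (∑ k, Δn k * ω k)^2) * Δj m * j m)
      + (((∑ m, (Δj m)^2) - (∑ k, Δn k * ω k)^2)^2 - 4 * (∑ k, Δn k * ω k)^2) = 0 := by
  set N : ℝ := ∑ k, n k * ω k with hN
  set T : ℝ := ∑ k, Δn k * ω k with hT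
  set S : ℝ := ∑ m, j m * Δj m with hS
  set P : ℝ := ∑ m, (Δj m)^2 with hP
  set J : ℝ := ∑ m, (j m)^2 with hJ
  set A : ℝ := Real.sqrt (J + 1) with hA
  set B : ℝ := Real.sqrt ((∑ m, (j m + Δj m)^2) + 1) with hB
  have hsum2 : (∑ k, (n k + Δn k) * ω k) = N + T := by
    rw [hN, hT, ← Finset.sum_add_distrib]
    exact Finset.sum_congr rfl (fun k _ => by ring)
  have hA2 : A^2 = J + 1 := Real.sq_sqrt (by positivity)
  have expand : (∑ m, (j m + Δj m)^2) = J + 2*S + P := by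
    rw [hJ, hS, hP, Finset.mul_sum, ← Finset.sum_add_distrib, ← Finset.sum_add_distrib]
    exact Finset.sum_congr rfl (fun m _ => by ring)
  have hB2 : B^2 = J + 2*S + P + 1 := by
    rw [hB, Real.sq_sqrt (by positivity), expand]
  have hA0 : 0 ≤ A := Real.sqrt_nonneg _
  have hB0 : 0 ≤ B := Real.sqrt_nonneg _
  rw [hsum2] at h2
  have hN2 : N^2 = J + 1 := by
    rcases hε with rfl | rfl
    · linear_combination (N - A) * h1 + hA2
    · linear_combination (-(N + A)) * h1 + hA2
  have hNT2 : (N + T)^2 = J + 2*S + P + 1 := by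
    rcases hε' with rfl | rfl
    · linear_combination (N + T - B) * h2 + hB2
    · linear_combination (-(N + T + B)) * h2 + hB2
  have key : (2*S + P - T^2)^2 = 4*T^2*(J+1) := by
    linear_combination (2*N*T - T^2 + 2*S + P) * hN2 - (2*N*T - T^2 + 2*S + P) * hNT2
      + 4*T^2 * hN2
  refine ⟨key, ?_⟩
  have hsq := sq_sum_split (fun m => Δj m * j m)
  have e1 : (∑ m, (4 * (Δj m)^2 - 4 * T^2) * (j m)^2)
      = 4 * (∑ m, (Δj m * j m)^2) - 4*T^2*J := by
    rw [hJ, Finset.mul_sum, Finset.mul_sum, ← Finset.sum_sub_distrib]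
    exact Finset.sum_congr rfl (fun m _ => by ring)
  have e2 : (∑ q : {q : Fin d × Fin d // q.1 < q.2},
        8 * Δj q.1.1 * Δj q.1.2 * j q.1.1 * j q.1.2)
      = 4 * ((∑ m, Δj m * j m)^2 - ∑ m, (Δj m * j m)^2) := by
    have hterm : (∑ q : {q : Fin d × Fin d // q.1 < q.2},
        8 * Δj q.1.1 * Δj q.1.2 * j q.1.1 * j q.1.2)
        = 8 * ∑ q : {q : Fin d × Fin d // q.1 < q.2},
            (Δj q.1.1 * j q.1.1) * (Δj q.1.2 * j q.1.2) := by
      rw [Finset.mul_sum Finset.univ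
        (fun q : {q : Fin d × Fin d // q.1 < q.2} =>
          (Δj q.1.1 * j q.1.1) * (Δj q.1.2 * j q.1.2)) 8]
      exact Finset.sum_congr rfl (fun q _ => by ring)
    rw [hterm, hsq]
    ring
  have e3 : (∑ m, (4 * P - 4 * T^2) * Δj m * j m) = (4*P - 4*T^2) * S := by
    rw [hS, Finset.mul_sum Finset.univ (fun m => j m * Δj m) (4*P - 4*T^2)]
    exact Finset.sum_congr rfl (fun m _ => by ring)
  have hSS : S = ∑ m, Δj m * j m := by
    rw [hS]; exact Finset.sum_congr rfl (fun m _ => by ring)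
  rw [e1, e2, e3, ← hSS]
  linear_combination key
end

section
/- Let b, d ≥ 1, ω ∈ ℝ^b, and let (Δn₀, Δj₀) ∈ ℝ^b × ℝ^d satisfy |Δj₀|² − (Δn₀·ω)² ≠ 0. Let (n, j) ∈ ℝ^b × ℝ^d satisfy ε(n·ω) + √(|j|²+1) = 0 for some sign ε ∈ {+1, −1}. Then there exist at most two distinct nonzero real numbers α (in particular, at most two distinct nonzero integers α) such that the translated point (n + αΔn₀, j + αΔj₀) also lies on the characteristics, i.e., such that ε_α((n + αΔn₀)·ω) + √(|j + αΔj₀|²+1) = 0 for some sign ε_α ∈ {+1, −1}. -/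
open scoped BigOperators

/-- in a degenerate direction (Δn₀, Δj₀) with |Δj₀|² − (Δn₀·ω)² ≠ 0, at most
two distinct nonzero multiples of the direction translate a point of the characteristics
back onto the characteristics. -/
theorem at_most_two_nonzero_multiples_stay_on_characteristics
    {b d : ℕ} (hb : 1 ≤ b) (hd : 1 ≤ d)
    (ω Δn₀ : Fin b → ℝ) (Δj₀ : Fin d → ℝ)
    (hne : (∑ m, (Δj₀ m)^2) - (∑ k, Δn₀ k * ω k)^2 ≠ 0)
    (n : Fin b → ℝ) (j : Fin d → ℝ) (ε : ℝ) (hε : ε = 1 ∨ ε = -1)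
    (h : ε * (∑ k, n k * ω k) + Real.sqrt ((∑ m, (j m)^2) + 1) = 0) :
    ∃ α₁ α₂ : ℝ, ∀ α : ℝ, α ≠ 0 →
      (∃ εα : ℝ, (εα = 1 ∨ εα = -1) ∧
        εα * (∑ k, (n k + α * Δn₀ k) * ω k)
          + Real.sqrt ((∑ m, (j m + α * Δj₀ m)^2) + 1) = 0) →
      α = α₁ ∨ α = α₂ := by
  set N := ∑ k, n k * ω k with hN
  set A := ∑ k, Δn₀ k * ω k with hA
  set J := ∑ m, (j m)^2 with hJdef
  set B := ∑ m, j m * Δj₀ m with hB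
  set C := ∑ m, (Δj₀ m)^2 with hC
  have hJ : 0 ≤ J := Finset.sum_nonneg fun m _ => sq_nonneg _
  have hsq : Real.sqrt (J + 1) ^ 2 = J + 1 := Real.sq_sqrt (by linarith)
  have hN2 : N ^ 2 = J + 1 := by
    have h1 : Real.sqrt (J + 1) = -(ε * N) := by linarith
    rw [h1] at hsq
    rcases hε with rfl | rfl <;> linear_combination hsq
  refine ⟨2 * (B - N * A) / (A ^ 2 - C), 2 * (B - N * A) / (A ^ 2 - C),
    fun α hα ⟨εα, hεα, hchar⟩ => ?_⟩
  left
  have hsum1 : (∑ k, (n k + α * Δn₀ k) * ω k) = N + α * A := by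
    simp only [hN, hA, Finset.mul_sum, ← Finset.sum_add_distrib]
    exact Finset.sum_congr rfl fun k _ => by ring
  have hsum2 : (∑ m, (j m + α * Δj₀ m)^2) = J + 2 * α * B + α ^ 2 * C := by
    simp only [hJdef, hB, hC, Finset.mul_sum, ← Finset.sum_add_distrib]
    exact Finset.sum_congr rfl fun m _ => by ring
  rw [hsum1, hsum2] at hchar
  have hpos : (0:ℝ) ≤ J + 2 * α * B + α ^ 2 * C + 1 := by
    rw [← hsum2]
    positivity
  have hsq2 : Real.sqrt (J + 2 * α * B + α ^ 2 * C + 1) ^ 2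
      = J + 2 * α * B + α ^ 2 * C + 1 := Real.sq_sqrt hpos
  have hE : (N + α * A) ^ 2 = J + 2 * α * B + α ^ 2 * C + 1 := by
    have h1 : Real.sqrt (J + 2 * α * B + α ^ 2 * C + 1) = -(εα * (N + α * A)) := by
      linarith
    rw [h1] at hsq2
    rcases hεα with rfl | rfl <;> linear_combination hsq2
  have hfac : α * (2 * N * A + α * A ^ 2 - 2 * B - α * C) = 0 := by linear_combination hE - hN2
  rcases mul_eq_zero.mp hfac with h0 | h0
  · exact absurd h0 hα
  · rw [eq_div_iff (by intro h'; apply hne; linarith)]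
    linarith
end

section
/- Assume the genericity conditions (i) and (ii) hold. Then for every B'-tuple of pairwise distinct elements (Δn_i, Δj_i) ∈ 𝒜∖𝒢 with Δj_i ≠ 0 for all i = 1,…,B', the linear system of B' equations in the B'−1 real unknowns (x_1,…,x_d, y_1,…,y_{d(d−1)/2}, z_1,…,z_d), namely Σ_{m=1}^d a_m^{(i)} x_m + Σ_{ℓ=1}^{d(d−1)/2} b_ℓ^{(i)} y_ℓ + Σ_{m=1}^d c_m^{(i)} z_m + W^{(i)} = 0 for i = 1,…,B' (where (a^{(i)}, b^{(i)}, c^{(i)}) = L_i and W^{(i)} = W_i are the coefficients associated with (Δn_i, Δj_i)), has no solution. -/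
open scoped BigOperators

namespace NLW

lemma descent_aux {n : ℕ} {ι : Type} [Fintype ι] [DecidableEq ι]
    (M : Fin n → ι → ℝ) (w : Fin n → ℝ) (hw : ∀ i, w i ≠ 0)
    (hgen : ∀ ρ : ℕ, 1 ≤ ρ →
      ∀ r : Fin (ρ+1) → Fin n, Function.Injective r →
      ∀ c : Fin ρ → ι, Function.Injective c →
      (∀ i0 : Fin (ρ+1), Matrix.det (Matrix.of fun u v : Fin ρ => M (r (i0.succAbove u)) (c v)) ≠ 0) →
      Matrix.det (Matrix.of fun u v : Fin (ρ+1) =>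
        if h : (v : ℕ) < ρ then M (r u) (c ⟨v, h⟩) else w (r u)) ≠ 0) :
    ∀ ρ : ℕ, ∀ r : Fin (ρ+1) → Fin n, Function.Injective r →
      ∀ c : Fin ρ → ι, Function.Injective c →
      ¬ ∃ y : Fin ρ → ℝ, ∀ u, (∑ v, M (r u) (c v) * y v) + w (r u) = 0 := by
  intro ρ
  induction ρ with
  | zero =>
    rintro r hr c hc ⟨y, hy⟩
    have h0 := hy 0
    simp at h0
    exact hw (r 0) h0
  | succ ρ ih =>
    rintro r hr c hc ⟨y, hy⟩
    by_cases hmin : ∀ i0 : Fin (ρ+1+1),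
        Matrix.det (Matrix.of fun u v : Fin (ρ+1) => M (r (i0.succAbove u)) (c v)) ≠ 0
    · refine hgen (ρ+1) (by omega) r hr c hc hmin ?_
      apply Matrix.exists_mulVec_eq_zero_iff.mp
      refine ⟨(fun v => if h : (v : ℕ) < ρ+1 then y ⟨v, h⟩ else 1), ?_, ?_⟩
      · intro h
        have := congrFun h (Fin.last (ρ+1))
        simp [Fin.last] at this
      · funext u
        simp only [Matrix.mulVec, dotProduct, Matrix.of_apply, Pi.zero_apply]
        rw [Fin.sum_univ_castSucc]
        have hlast : ¬ ((Fin.last (ρ+1) : ℕ) < ρ+1) := by simp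
        rw [dif_neg hlast, dif_neg hlast]
        have hterm : ∀ v : Fin (ρ+1),
            (if h : ((v.castSucc : Fin (ρ+2)) : ℕ) < ρ+1 then M (r u) (c ⟨((v.castSucc : Fin (ρ+2)) : ℕ), h⟩) else w (r u))
              * (if h : ((v.castSucc : Fin (ρ+2)) : ℕ) < ρ+1 then y ⟨((v.castSucc : Fin (ρ+2)) : ℕ), h⟩ else 1)
            = M (r u) (c v) * y v := by
          intro v
          simp [Fin.is_lt, Fin.is_le]
        rw [Finset.sum_congr rfl (fun v _ => hterm v)]
        have := hy u
        linarith
    · push_neg at hmin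
      obtain ⟨s, hs⟩ := hmin
      obtain ⟨g, hg0, hgker⟩ := Matrix.exists_mulVec_eq_zero_iff.mpr hs
      obtain ⟨v0, hv0⟩ : ∃ v0, g v0 ≠ 0 := by
        by_contra h
        push_neg at h
        exact hg0 (funext fun v => h v)
      refine ih (r ∘ s.succAbove) (hr.comp Fin.succAbove_right_injective)
        (c ∘ v0.succAbove) (hc.comp Fin.succAbove_right_injective)
        ⟨fun v => y (v0.succAbove v) - y v0 / g v0 * g (v0.succAbove v), fun u => ?_⟩
      have hker : ∑ v : Fin (ρ+1), M (r (s.succAbove u)) (c v) * g v = 0 := by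
        have := congrFun hgker u
        simpa [Matrix.mulVec, dotProduct] using this
      have h2 : ∑ v : Fin (ρ+1), M (r (s.succAbove u)) (c v) * (y v - y v0 / g v0 * g v)
          + w (r (s.succAbove u)) = 0 := by
        have heq : ∑ v : Fin (ρ+1), M (r (s.succAbove u)) (c v) * (y v - y v0 / g v0 * g v)
            = ∑ v : Fin (ρ+1), M (r (s.succAbove u)) (c v) * y v
              - (y v0 / g v0) * ∑ v : Fin (ρ+1), M (r (s.succAbove u)) (c v) * g v := by
          rw [Finset.mul_sum, ← Finset.sum_sub_distrib]
          exact Finset.sum_congr rfl (fun v _ => by ring)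
        rw [heq, hker]
        have := hy (s.succAbove u)
        linarith
      rw [Fin.sum_univ_succAbove
        (fun v => M (r (s.succAbove u)) (c v) * (y v - y v0 / g v0 * g v)) v0] at h2
      have hz : y v0 - y v0 / g v0 * g v0 = 0 := by
        field_simp
        ring
      rw [hz, mul_zero, zero_add] at h2
      simpa using h2

lemma card_lidx_succ_le (d : ℕ) : Fintype.card (LIdx d) + 1 ≤ Bprime d := by
  have hS : Fintype.card {q : Fin d × Fin d // q.1 < q.2} ≤ ∑ i ∈ Finset.range d, i := by
    have hsig : Fintype.card (Σ b : Fin d, Fin (b : ℕ)) = ∑ i ∈ Finset.range d, i := by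
      simp only [Fintype.card_sigma, Fintype.card_fin]
      exact Fin.sum_univ_eq_sum_range (fun i => i) d
    rw [← hsig]
    refine Fintype.card_le_of_injective
      (fun q => ⟨q.1.2, ⟨(q.1.1 : ℕ), q.2⟩⟩) ?_
    rintro ⟨⟨a, b⟩, hab⟩ ⟨⟨a', b'⟩, hab'⟩ h
    have h1 : b = b' := congrArg Sigma.fst h
    subst h1
    have h2 : ((⟨(a : ℕ), hab⟩ : Fin (b : ℕ)) : Fin (b:ℕ)) = ⟨(a' : ℕ), hab'⟩ := by
      exact eq_of_heq (Sigma.mk.inj_iff.mp h).2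
    have h3 : (a : ℕ) = (a' : ℕ) := Fin.mk.inj_iff.mp h2
    have h4 : a = a' := Fin.ext h3
    subst h4
    rfl
  have h2 : (∑ i ∈ Finset.range d, i) * 2 = d * (d - 1) := Finset.sum_range_id_mul_two d
  have hcard : Fintype.card (LIdx d) = d + (Fintype.card {q : Fin d × Fin d // q.1 < q.2} + d) := by
    simp [LIdx]
  have hmul : (d+1)*(d+2) = d*(d-1) + 4*d + 2 := by
    rcases Nat.eq_zero_or_pos d with h | h
    · subst h; rfl
    · obtain ⟨e, rfl⟩ := Nat.exists_eq_add_of_le h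
      have h5 : 1 + e - 1 = e := by omega
      rw [h5]
      ring
  unfold Bprime
  omega

/-- under genericity (i) and (ii), the linearized system of B' affine
equations in the B'−1 unknowns has no solution. -/
theorem linearized_system_has_no_solution
    {b d p : ℕ} (hb : 1 ≤ b) (hd : 1 ≤ d) (hp : 1 ≤ p)
    (j : Fin b → Fin d → ℤ) (hdist : Function.Injective j) (hnz : ∀ k, j k ≠ 0)
    (hI : GenericI p j) (hII : GenericII p j)
    (E : Fin (Bprime d) → Idx b d) (hinj : Function.Injective E)
    (hE : ∀ i, E i ∈ AmbSet p j ∧ E i ∉ DegSet j ∧ (E i).2 ≠ 0) :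
    ¬ ∃ X : LIdx d → ℝ, ∀ i, (∑ t, Lfun j (E i) t * X t) + Wfun j (E i) = 0 := by
  rintro ⟨X, hX⟩
  have hw : ∀ i, Wfun j (E i) ≠ 0 := by
    intro i
    have hne : E i ≠ 0 := by
      intro h
      exact (hE i).2.2 (by rw [h]; rfl)
    exact (hI (E i) (hE i).1 hne).2.2
  have hcard := card_lidx_succ_le d
  refine descent_aux (fun i t => Lfun j (E i) t) (fun i => Wfun j (E i)) hw
    ?_ (Fintype.card (LIdx d)) (Fin.castLE hcard) (Fin.castLE_injective hcard)
    (Fintype.equivFin (LIdx d)).symm (Fintype.equivFin (LIdx d)).symm.injective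
    ⟨fun v => X ((Fintype.equivFin (LIdx d)).symm v), fun u => ?_⟩
  · intro ρ h1 r hr c hc hm
    have hle : ρ + 1 ≤ Bprime d := by
      simpa using Fintype.card_le_of_injective r hr
    exact hII E hinj hE ρ h1 (by omega) r hr c hc hm
  · have hsum : ∑ v, Lfun j (E (Fin.castLE hcard u)) ((Fintype.equivFin (LIdx d)).symm v)
        * X ((Fintype.equivFin (LIdx d)).symm v)
        = ∑ t, Lfun j (E (Fin.castLE hcard u)) t * X t :=
      Equiv.sum_comp (Fintype.equivFin (LIdx d)).symm
        (fun t => Lfun j (E (Fin.castLE hcard u)) t * X t)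
    simp only []
    rw [hsum]
    exact hX _

end NLW
end

section
/- Fix b ≥ 1, d ≥ 1 and pairwise distinct nonzero vectors j_1, …, j_b ∈ ℤ^d, and set ω⁰ = (√(|j_1|²+1), …, √(|j_b|²+1)) ∈ ℝ^b. There exist c' > 0 and q > b+1 such that for every n ∈ ℤ^b with n ≠ 0, every j ∈ ℤ^d and each sign ±: if ±n·ω⁰ + √(|j|²+1) ≠ 0, then |±n·ω⁰ + √(|j|²+1)| ≥ c' ‖n‖₁^{−q}. -/
open scoped BigOperators

section Helpers

lemma isIntegral_of_sq_natCast' {R K : Type*} [CommRing R] [CommRing K] [Algebra R K]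
    (x : K) (N : ℕ) (h : x^2 = N) : IsIntegral R x := by
  refine ⟨Polynomial.X^2 - Polynomial.C (N:R), Polynomial.monic_X_pow_sub_C _ (by norm_num), ?_⟩
  simp [Polynomial.eval₂, h]

lemma abs_emb_sqrt' {K : IntermediateField ℚ ℝ} (σ : K →ₐ[ℚ] ℂ) (x : K) (N : ℕ)
    (hx : x^2 = (N:K)) : ‖σ x‖ = Real.sqrt N := by
  have h2 : (σ x)^2 = (N:ℂ) := by rw [← map_pow, hx]; simp
  have h3 : (‖σ x‖)^2 = (N:ℝ) := by
    rw [← norm_pow, h2]; simp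
  have h0 : 0 ≤ ‖σ x‖ := norm_nonneg _
  nlinarith [Real.sq_sqrt (show (0:ℝ) ≤ N by positivity), Real.sqrt_nonneg (N:ℝ)]

lemma lb_helper {x T u : ℝ} (hT : 0 < T) (h1 : 1 ≤ x * T) (hu : u * T ≤ 1) : u ≤ x :=
  le_of_mul_le_mul_right (hu.trans h1) hT

noncomputable def incl (K : IntermediateField ℚ ℝ) : K →ₐ[ℚ] ℂ :=
  (Complex.ofRealAm.restrictScalars ℚ).comp K.val

lemma incl_abs (K : IntermediateField ℚ ℝ) (y : K) : ‖incl K y‖ = |(y:ℝ)| := by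
  show ‖((y:ℝ):ℂ)‖ = _
  rw [Complex.norm_real, Real.norm_eq_abs]

lemma int_lb {K : IntermediateField ℚ ℝ} [FiniteDimensional ℚ K] (y : K)
    (hI : IsIntegral ℤ y) (h0 : y ≠ 0) (M : ℝ)
    (hσ : ∀ σ : K →ₐ[ℚ] ℂ, ‖σ y‖ ≤ M) :
    1 ≤ |(y:ℝ)| * M ^ (Module.finrank ℚ K - 1) := by
  classical
  have hnorm : IsIntegral ℤ (Algebra.norm ℚ y) := Algebra.isIntegral_norm ℚ hI
  obtain ⟨z, hz⟩ := IsIntegrallyClosed.isIntegral_iff.mp hnorm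
  have hN0 : Algebra.norm ℚ y ≠ 0 := by
    rw [Algebra.norm_ne_zero_iff]; exact h0
  have hz0 : z ≠ 0 := by rintro rfl; simp at hz; exact hN0 hz.symm
  have h1 : (1:ℝ) ≤ |(Algebra.norm ℚ y : ℚ)| := by
    have : (1:ℚ) ≤ |(Algebra.norm ℚ y : ℚ)| := by
      rw [← hz]
      have : (1:ℤ) ≤ |z| := Int.one_le_abs (by omega)
      simpa using (by exact_mod_cast this : (1:ℚ) ≤ |(z:ℚ)|)
    exact_mod_cast this
  have hprod : ‖algebraMap ℚ ℂ (Algebra.norm ℚ y)‖ =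
      ∏ σ : K →ₐ[ℚ] ℂ, ‖σ y‖ := by
    rw [Algebra.norm_eq_prod_embeddings]
    exact norm_prod _ _
  have habs : ‖algebraMap ℚ ℂ (Algebra.norm ℚ y)‖ = |(Algebra.norm ℚ y : ℚ)| := by
    have : (algebraMap ℚ ℂ) (Algebra.norm ℚ y) = (((Algebra.norm ℚ y : ℚ) : ℝ) : ℂ) := by
      push_cast; norm_cast
    rw [this, Complex.norm_real, Real.norm_eq_abs, ← Rat.cast_abs]
  have hmem : incl K ∈ Finset.univ (α := K →ₐ[ℚ] ℂ) := Finset.mem_univ _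
  have hsplit : ∏ σ : K →ₐ[ℚ] ℂ, ‖σ y‖
      = ‖incl K y‖ * ∏ σ ∈ Finset.univ.erase (incl K), ‖σ y‖ :=
    (Finset.mul_prod_erase _ _ hmem).symm
  have hcard : (Finset.univ.erase (incl K)).card = Module.finrank ℚ K - 1 := by
    rw [Finset.card_erase_of_mem hmem, Finset.card_univ, AlgHom.card]
  have hbound : ∏ σ ∈ Finset.univ.erase (incl K), ‖σ y‖
      ≤ M ^ (Module.finrank ℚ K - 1) := by
    rw [← hcard, ← Finset.prod_const]
    exact Finset.prod_le_prod (fun σ _ => norm_nonneg _) (fun σ _ => hσ σ)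
  calc (1:ℝ) ≤ |(Algebra.norm ℚ y : ℚ)| := h1
    _ = ‖incl K y‖ * ∏ σ ∈ Finset.univ.erase (incl K), ‖σ y‖ := by
        rw [← habs, hprod, hsplit]
    _ ≤ |(y:ℝ)| * M ^ (Module.finrank ℚ K - 1) := by
        rw [incl_abs]
        exact mul_le_mul_of_nonneg_left hbound (abs_nonneg _)

end Helpers

section Field
variable {b : ℕ} (a : Fin b → ℕ)

noncomputable def Kfield : IntermediateField ℚ ℝ :=
  IntermediateField.adjoin ℚ (Set.range (fun k : Fin b => Real.sqrt (a k)))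

noncomputable def skel (k : Fin b) : Kfield a :=
  ⟨Real.sqrt (a k), IntermediateField.subset_adjoin _ _ ⟨k, rfl⟩⟩

lemma skel_sq (k : Fin b) : (skel a k)^2 = ((a k : ℕ) : Kfield a) := by
  apply Subtype.ext
  push_cast
  exact Real.sq_sqrt (by positivity)

instance : FiniteDimensional ℚ (Kfield a) := by
  haveI : Finite (Set.range (fun k : Fin b => Real.sqrt (a k))) :=
    (Set.finite_range _).to_subtype
  apply IntermediateField.finiteDimensional_adjoin
  rintro x ⟨k, rfl⟩
  exact isIntegral_of_sq_natCast' (R := ℚ) (Real.sqrt (a k)) (a k)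
    (Real.sq_sqrt (by positivity))

end Field

lemma obl {Z Ne T : ℝ} (hZ : 0 < Z) (hNe : 0 < Ne) (h : T ≤ Z * Ne) : Z⁻¹ * Ne⁻¹ * T ≤ 1 := by
  have hT : Z⁻¹ * Ne⁻¹ * T ≤ Z⁻¹ * Ne⁻¹ * (Z * Ne) := by
    apply mul_le_mul_of_nonneg_left h (by positivity)
  calc Z⁻¹ * Ne⁻¹ * T ≤ Z⁻¹ * Ne⁻¹ * (Z * Ne) := hT
    _ = 1 := by
        field_simp

set_option maxHeartbeats 4000000 in
lemma key (b : ℕ) (a : Fin b → ℕ) :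
    ∃ c' : ℝ, 0 < c' ∧ ∃ D : ℕ,
      ∀ n : Fin b → ℤ, 1 ≤ ∑ k, |n k| →
      ∀ m : ℕ, 1 ≤ m → ∀ ε : ℝ, (ε = 1 ∨ ε = -1) →
      ε * (∑ k, (n k : ℝ) * Real.sqrt (a k)) + Real.sqrt m ≠ 0 →
      c' * ((((∑ k, |n k| : ℤ) : ℝ)) ^ (2*D+1))⁻¹ ≤
        |ε * (∑ k, (n k : ℝ) * Real.sqrt (a k)) + Real.sqrt m| := by
  classical
  set K := Kfield a with hK
  obtain ⟨d0, hd0⟩ : ∃ d0, Module.finrank ℚ K = d0 + 1 :=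
    ⟨Module.finrank ℚ K - 1, by have := Module.finrank_pos (R := ℚ) (M := K); omega⟩
  set C : ℝ := 1 + ∑ k, Real.sqrt (a k) with hC
  have hC1 : 1 ≤ C := by
    have : 0 ≤ ∑ k, Real.sqrt (a k) :=
      Finset.sum_nonneg fun k _ => Real.sqrt_nonneg _
    linarith
  have hC0 : 0 < C := lt_of_lt_of_le one_pos hC1
  set Z : ℝ := 3*C*(5*C^2)^(d0+1) with hZ
  have hZ1 : 1 ≤ Z := by
    have h5 : (1:ℝ) ≤ 5*C^2 := by nlinarith
    have := one_le_pow₀ (M₀ := ℝ) h5 (n := d0+1)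
    nlinarith
  have hZ0 : 0 < Z := lt_of_lt_of_le one_pos hZ1
  refine ⟨Z⁻¹, inv_pos.mpr hZ0, d0+1, ?_⟩
  intro n hn m hm ε hε hx
  set N : ℝ := ((∑ k, |n k| : ℤ) : ℝ) with hNdef
  have hN1 : (1:ℝ) ≤ N := by rw [hNdef]; exact_mod_cast hn
  have hN0 : (0:ℝ) < N := lt_of_lt_of_le one_pos hN1
  set e : ℕ := 2*(d0+1)+1 with he
  have hNe1 : (1:ℝ) ≤ N ^ e := one_le_pow₀ hN1
  have hNe0 : (0:ℝ) < N ^ e := lt_of_lt_of_le one_pos hNe1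
  -- key sum bound
  have hsqrtC : ∀ k, Real.sqrt (a k) ≤ C := by
    intro k
    have : Real.sqrt (a k) ≤ ∑ k, Real.sqrt (a k) :=
      Finset.single_le_sum (f := fun k : Fin b => Real.sqrt (a k))
        (fun i _ => Real.sqrt_nonneg _) (Finset.mem_univ k)
    linarith
  have hNsum : N = ∑ k, |(n k : ℝ)| := by
    rw [hNdef]; push_cast; rfl
  have hsum : ∑ k, |(n k : ℝ)| * Real.sqrt (a k) ≤ C * N := by
    calc ∑ k, |(n k : ℝ)| * Real.sqrt (a k) ≤ ∑ k, |(n k : ℝ)| * C :=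
          Finset.sum_le_sum fun k _ => mul_le_mul_of_nonneg_left (hsqrtC k) (abs_nonneg _)
      _ = C * N := by
          rw [hNsum, Finset.mul_sum]
          exact Finset.sum_congr rfl fun k _ => mul_comm _ _
  set α : ℝ := ε * (∑ k, (n k : ℝ) * Real.sqrt (a k)) with hα
  have hεabs : |ε| = 1 := by rcases hε with h | h <;> simp [h]
  have hαabs : |α| ≤ C * N := by
    rw [hα, abs_mul, hεabs, one_mul]
    calc |∑ k, (n k : ℝ) * Real.sqrt (a k)| ≤ ∑ k, |(n k : ℝ) * Real.sqrt (a k)| :=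
          Finset.abs_sum_le_sum_abs _ _
      _ = ∑ k, |(n k : ℝ)| * Real.sqrt (a k) := by
          refine Finset.sum_congr rfl fun k _ => ?_
          rw [abs_mul, abs_of_nonneg (Real.sqrt_nonneg _)]
      _ ≤ C * N := hsum
  have hCN1 : 1 ≤ C * N := by nlinarith
  -- case 1 : sqrt m large
  rcases le_or_gt (C*N+1) (Real.sqrt m) with hbig | hsmall
  · have h1 : 1 ≤ |α + Real.sqrt m| := by
      have h2 : 1 ≤ α + Real.sqrt m := by
        have := abs_le.mp hαabs
        linarith [this.1]
      rw [abs_of_pos (by linarith : (0:ℝ) < α + Real.sqrt m)]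
      exact h2
    refine lb_helper (T := 1) one_pos (by simpa using h1) ?_
    rw [mul_one]
    have : Z⁻¹ ≤ 1 := inv_le_one_of_one_le₀ hZ1
    have h2 : (N ^ e)⁻¹ ≤ 1 := inv_le_one_of_one_le₀ hNe1
    nlinarith [inv_pos.mpr hZ0, inv_pos.mpr hNe0]
  · -- sqrt m small
    have hm1R : (1:ℝ) ≤ m := by exact_mod_cast hm
    have hsm : Real.sqrt m ≤ 2*C*N := by linarith
    have hmle : (m:ℝ) ≤ 4*C^2*N^2 := by
      have h0 : (m:ℝ) = (Real.sqrt m)^2 := (Real.sq_sqrt (by positivity)).symm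
      rw [h0]
      nlinarith [Real.sqrt_nonneg (m:ℝ)]
    obtain ⟨ez, hez, hεz⟩ : ∃ ez : ℤ, (ez = 1 ∨ ez = -1) ∧ ε = (ez:ℝ) := by
      rcases hε with h | h
      · exact ⟨1, Or.inl rfl, by simp [h]⟩
      · exact ⟨-1, Or.inr rfl, by simp [h]⟩
    set αK : K := (ez : K) * ∑ k, (n k : K) * skel a k with hαK
    have hαKcoe : (αK : ℝ) = α := by
      rw [hα, hεz, hαK]
      push_cast
      rfl
    have hskel_int : ∀ k, IsIntegral ℤ (skel a k) := fun k =>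
      isIntegral_of_sq_natCast' _ _ (skel_sq a k)
    have hαKint : IsIntegral ℤ αK := by
      show αK ∈ integralClosure ℤ K
      refine mul_mem (intCast_mem _ _) (sum_mem fun k _ => mul_mem (intCast_mem _ _) ?_)
      exact hskel_int k
    have hσα : ∀ σ : K →ₐ[ℚ] ℂ, ‖σ αK‖ ≤ C * N := by
      intro σ
      have hmap : σ αK = (ez:ℂ) * ∑ k, (n k : ℂ) * σ (skel a k) := by
        rw [hαK, map_mul, map_intCast, map_sum]
        congr 1
        refine Finset.sum_congr rfl fun k _ => ?_
        rw [map_mul, map_intCast]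
      have habs_ez : ‖(ez:ℂ)‖ = 1 := by rcases hez with h|h <;> simp [h]
      rw [hmap, norm_mul, habs_ez, one_mul]
      calc ‖∑ k, (n k : ℂ) * σ (skel a k)‖
          ≤ ∑ k, ‖(n k : ℂ) * σ (skel a k)‖ := norm_sum_le _ _
        _ = ∑ k, |(n k : ℝ)| * Real.sqrt (a k) := by
            refine Finset.sum_congr rfl fun k _ => ?_
            rw [norm_mul, Complex.norm_intCast, abs_emb_sqrt' σ _ _ (skel_sq a k)]
        _ ≤ C * N := hsum
    set yK : K := αK^2 - (m : K) with hyK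
    have hyKcoe : (yK : ℝ) = α^2 - m := by
      rw [hyK]
      push_cast
      rw [hαKcoe]
    by_cases hy0 : yK = 0
    · -- degenerate: α² = m
      have hα2 : α^2 = m := by
        have h00 : (yK:ℝ) = 0 := by rw [hy0]; simp
        rw [hyKcoe] at h00; linarith
      have hsq : Real.sqrt m = |α| := by rw [← hα2, Real.sqrt_sq_eq_abs]
      have hα0 : α ≠ 0 := by
        intro h; rw [h] at hα2
        simp at hα2
        rw [← hα2] at hm1R
        norm_num at hm1R
      have hαpos : 0 < α := by
        rcases lt_trichotomy α 0 with h|h|h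
        · exfalso; apply hx; rw [hsq, abs_of_neg h]; ring
        · exact absurd h hα0
        · exact h
      have hxval : α + Real.sqrt m = 2*α := by rw [hsq, abs_of_pos hαpos]; ring
      have hαK0 : αK ≠ 0 := by
        intro h; apply hα0; rw [← hαKcoe, h]; simp
      have hint := int_lb αK hαKint hαK0 (C*N) hσα
      rw [hd0, Nat.add_sub_cancel, hαKcoe, abs_of_pos hαpos] at hint
      rw [hxval, abs_of_pos (by linarith : (0:ℝ) < 2*α)]
      have hCNpos : (0:ℝ) < C*N := by nlinarith
      refine lb_helper (T := (C*N)^d0) (pow_pos hCNpos d0) ?_ ?_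
      · nlinarith [pow_pos hCNpos d0]
      · refine obl hZ0 hNe0 ?_
        have h1 : C^d0 ≤ (5*C^2)^(d0+1) :=
          calc C^d0 ≤ (5*C^2)^d0 := pow_le_pow_left₀ (by positivity) (by nlinarith) d0
            _ ≤ (5*C^2)^(d0+1) := pow_le_pow_right₀ (by nlinarith) (Nat.le_succ _)
        have h2 : N^d0 ≤ N^(2*(d0+1)+1) := pow_le_pow_right₀ hN1 (by omega)
        calc (C*N)^d0 = C^d0 * N^d0 := mul_pow _ _ _
          _ ≤ (5*C^2)^(d0+1) * N^(2*(d0+1)+1) :=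
              mul_le_mul h1 h2 (by positivity) (by positivity)
          _ ≤ 3*C*((5*C^2)^(d0+1) * N^(2*(d0+1)+1)) := by
              have h3 : (1:ℝ) ≤ 3*C := by nlinarith
              have hXpos : (0:ℝ) < (5*C^2)^(d0+1) * N^(2*(d0+1)+1) := by positivity
              nlinarith [mul_nonneg (by linarith : (0:ℝ) ≤ 3*C - 1) hXpos.le]
          _ = Z * N^e := by rw [hZ, he]; ring
    · -- nondegenerate
      have hyKint : IsIntegral ℤ yK := by
        show yK ∈ integralClosure ℤ K
        refine sub_mem (pow_mem ?_ 2) (natCast_mem _ _)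
        exact hαKint
      have hσy : ∀ σ : K →ₐ[ℚ] ℂ, ‖σ yK‖ ≤ 5*C^2*N^2 := by
        intro σ
        rw [hyK, map_sub, map_pow, map_natCast]
        calc ‖(σ αK)^2 - (m:ℂ)‖
            ≤ ‖(σ αK)^2‖ + ‖(m:ℂ)‖ := norm_sub_le _ _
          _ = (‖σ αK‖)^2 + (m:ℝ) := by rw [norm_pow, Complex.norm_natCast]
          _ ≤ (C*N)^2 + 4*C^2*N^2 := by
              have h4 := hσα σ
              have h5 := norm_nonneg (σ αK)
              nlinarith
          _ ≤ 5*C^2*N^2 := by nlinarith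
      have hint := int_lb yK hyKint hy0 (5*C^2*N^2) hσy
      rw [hd0, Nat.add_sub_cancel] at hint
      have hfac : α^2 - (m:ℝ) = -((α + Real.sqrt m) * (Real.sqrt m - α)) := by
        have h6 := Real.sq_sqrt (show (0:ℝ) ≤ m by positivity)
        nlinarith [h6]
      have hyabs : |(yK:ℝ)| = |α + Real.sqrt m| * |Real.sqrt m - α| := by
        rw [hyKcoe, hfac, abs_neg, abs_mul]
      have hsub : |Real.sqrt m - α| ≤ 3*C*N := by
        have h7 := abs_le.mp hαabs
        rw [abs_le]
        constructor <;> nlinarith [Real.sqrt_nonneg (m:ℝ)]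
      have h1 : 1 ≤ |α + Real.sqrt m| * (3*C*N * (5*C^2*N^2)^d0) := by
        have hp : (0:ℝ) ≤ (5*C^2*N^2)^d0 := by positivity
        calc (1:ℝ) ≤ |(yK:ℝ)| * (5*C^2*N^2)^d0 := hint
          _ = |α + Real.sqrt m| * |Real.sqrt m - α| * (5*C^2*N^2)^d0 := by rw [hyabs]
          _ ≤ |α + Real.sqrt m| * (3*C*N) * (5*C^2*N^2)^d0 := by
              apply mul_le_mul_of_nonneg_right _ hp
              exact mul_le_mul_of_nonneg_left hsub (abs_nonneg _)
          _ = |α + Real.sqrt m| * (3*C*N * (5*C^2*N^2)^d0) := by ring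
      refine lb_helper (T := 3*C*N * (5*C^2*N^2)^d0) (by positivity) h1 ?_
      refine obl hZ0 hNe0 ?_
      have hTform : 3*C*N * (5*C^2*N^2)^d0 = 3*C*(5*C^2)^d0 * N^(2*d0+1) := by
        rw [mul_pow, ← pow_mul]
        ring
      rw [hTform]
      have h1' : (5*C^2)^d0 ≤ (5*C^2)^(d0+1) := pow_le_pow_right₀ (by nlinarith) (Nat.le_succ _)
      have h2' : N^(2*d0+1) ≤ N^(2*(d0+1)+1) := pow_le_pow_right₀ hN1 (by omega)
      calc 3*C*(5*C^2)^d0 * N^(2*d0+1)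
          ≤ 3*C*(5*C^2)^(d0+1) * N^(2*(d0+1)+1) := by
            refine mul_le_mul ?_ h2' (by positivity) (by positivity)
            exact mul_le_mul_of_nonneg_left h1' (by positivity)
        _ = Z * N^e := by rw [hZ, he]



namespace NLW

/-- Diophantine (Schmidt-type) lower bound on the distance of ±n·ω⁰ + √(|j|²+1)
from zero, uniform in j ∈ ℤ^d, away from the characteristics. -/

theorem diophantine_lower_bound_off_characteristics
    {b d : ℕ} (hb : 1 ≤ b) (hd : 1 ≤ d)
    (j : Fin b → Fin d → ℤ) (hdist : Function.Injective j) (hnz : ∀ k, j k ≠ 0) :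
    ∃ c' : ℝ, 0 < c' ∧ ∃ q : ℝ, (b : ℝ) + 1 < q ∧
      ∀ n : Fin b → ℤ, n ≠ 0 → ∀ jj : Fin d → ℤ, ∀ ε : ℝ, (ε = 1 ∨ ε = -1) →
        ε * dotP (omega0 j) n + Real.sqrt (sqnorm jj + 1) ≠ 0 →
        c' * (((∑ k, |n k| : ℤ) : ℝ) ^ (-q)) ≤
          |ε * dotP (omega0 j) n + Real.sqrt (sqnorm jj + 1)| := by
  classical
  set A : Fin b → ℕ := fun k => (∑ m, (j k m).natAbs^2) + 1 with hA
  obtain ⟨c', hc', D, hkey⟩ := key b A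
  have hAcast : ∀ k, ((A k : ℕ) : ℝ) = sqnorm (j k) + 1 := by
    intro k
    rw [hA, sqnorm]
    push_cast [Nat.cast_natAbs]
    simp [sq_abs]
  refine ⟨c', hc', (b:ℝ) + 1 + (2*D+1 : ℕ), by
    have : (0:ℝ) < ((2*D+1 : ℕ):ℝ) := by positivity
    linarith, ?_⟩
  intro n hn jj ε hε hx
  -- basic facts about the norm of n
  have hS1 : (1:ℤ) ≤ ∑ k, |n k| := by
    obtain ⟨k0, hk0⟩ := Function.ne_iff.mp hn
    calc (1:ℤ) ≤ |n k0| := Int.one_le_abs (by simpa using hk0)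
      _ ≤ ∑ k, |n k| :=
        Finset.single_le_sum (f := fun k => |n k|) (fun i _ => abs_nonneg _) (Finset.mem_univ k0)
  have hNR1 : (1:ℝ) ≤ ((∑ k, |n k| : ℤ) : ℝ) := by exact_mod_cast hS1
  have hNR0 : (0:ℝ) < ((∑ k, |n k| : ℤ) : ℝ) := lt_of_lt_of_le one_pos hNR1
  -- matching dotP with the key lemma expression
  have hdot : dotP (omega0 j) n = ∑ k, (n k : ℝ) * Real.sqrt (A k) := by
    rw [dotP]
    refine Finset.sum_congr rfl fun k _ => ?_
    rw [omega0, hAcast k]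
  -- the m for the key lemma
  set M : ℕ := (∑ m, (jj m).natAbs^2) + 1 with hM
  have hM1 : 1 ≤ M := Nat.le_add_left _ _
  have hMcast : ((M : ℕ) : ℝ) = sqnorm jj + 1 := by
    rw [hM, sqnorm]
    push_cast [Nat.cast_natAbs]
    simp [sq_abs]
  have hx' : ε * (∑ k, (n k : ℝ) * Real.sqrt (A k)) + Real.sqrt M ≠ 0 := by
    rw [← hdot, hMcast]
    exact hx
  have hkey' := hkey n hS1 M hM1 ε hε hx'
  rw [← hdot, hMcast] at hkey'
  -- compare exponents
  refine le_trans ?_ hkey'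
  have hexp : ((∑ k, |n k| : ℤ) : ℝ) ^ (-((b:ℝ) + 1 + (2*D+1 : ℕ)))
      ≤ (((∑ k, |n k| : ℤ) : ℝ) ^ (2*D+1 : ℕ))⁻¹ := by
    have h1 : ((∑ k, |n k| : ℤ) : ℝ) ^ (-((b:ℝ) + 1 + (2*D+1 : ℕ)))
        ≤ ((∑ k, |n k| : ℤ) : ℝ) ^ (-((2*D+1 : ℕ) : ℝ)) := by
      apply Real.rpow_le_rpow_of_exponent_le hNR1
      have : (0:ℝ) ≤ (b:ℝ) + 1 := by positivity
      linarith
    have h2 : ((∑ k, |n k| : ℤ) : ℝ) ^ (-((2*D+1 : ℕ) : ℝ))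
        = (((∑ k, |n k| : ℤ) : ℝ) ^ (2*D+1 : ℕ))⁻¹ := by
      rw [Real.rpow_neg (le_of_lt hNR0), Real.rpow_natCast]
    rw [← h2]
    exact h1
  exact mul_le_mul_of_nonneg_left hexp (le_of_lt hc')


end NLW
end
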